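/- arXiv:2006.08074 — 4 statements merged into one kernel-verified Lean document; each statement's English description precedes it below -/
import Mathlib

section
/- Let R be a ring and a,b,c,d ∈ R satisfy (ac)² = (db)(ac), (db)² = (ac)(db), b(ac)a = b(db)a, and c(ac)d = c(db)d. Then for every natural number i ≥ 1, c(ac)^i d = c(db)^i d. -/
theorem c_pow_d {R : Type*} [Ring R] (a b c d : R)
    (h1 : (a * c) ^ 2 = (d * b) * (a * c)) (h2 : (d * b) ^ 2 = (a * c) * (d * b))
    (h3 : b * (a * c) * a = b * (d * b) * a) (h4 : c * (a * c) * d = c * (d * b) * d) :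
    ∀ i : ℕ, 1 ≤ i → c * (a * c) ^ i * d = c * (d * b) ^ i * d := by
  intro i hi
  induction i, hi using Nat.le_induction with
  | base => simpa [pow_one] using h4
  | succ n hn ih =>
    obtain ⟨m, rfl⟩ := Nat.exists_eq_add_of_le hn
    have key : (a * c) * (d * b) ^ (1 + m) = (d * b) ^ (1 + m + 1) := by
      have : (a * c) * (d * b) = (d * b) ^ 2 := h2.symm
      calc (a * c) * (d * b) ^ (1 + m)
          = ((a * c) * (d * b)) * (d * b) ^ m := by
            rw [pow_add, pow_one, ← mul_assoc]
        _ = (d * b) ^ 2 * (d * b) ^ m := by rw [this]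
        _ = (d * b) ^ (1 + m + 1) := by rw [← pow_add]; ring_nf
    calc c * (a * c) ^ (1 + m + 1) * d
        = c * a * (c * (a * c) ^ (1 + m) * d) := by
          rw [pow_succ']
          simp only [mul_assoc]
      _ = c * a * (c * (d * b) ^ (1 + m) * d) := by rw [ih]
      _ = c * ((a * c) * (d * b) ^ (1 + m)) * d := by simp only [mul_assoc]
      _ = c * (d * b) ^ (1 + m + 1) * d := by rw [key]
end

section
/- Let R be a ring and a,b,c ∈ R satisfy (aba)b = (aca)b, b(aba) = b(aca), (aba)c = (aca)c, and c(aba) = c(aca). Then 1 - ba has a generalized Drazin inverse if and only if 1 - ac has a generalized Drazin inverse. -/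
/-- An element is quasinilpotent if `1 + a*x` is a unit for every `x` commuting with `a`. -/
def Quasinilpotent {R : Type*} [Ring R] (a : R) : Prop :=
  ∀ x : R, x * a = a * x → IsUnit (1 + a * x)

/-- `x` is a generalized Drazin inverse of `a`. -/
def IsGDrazin {R : Type*} [Ring R] (a x : R) : Prop :=
  x = x * a * x ∧ (∀ y : R, y * a = a * y → x * y = y * x) ∧
    Quasinilpotent (a - a ^ 2 * x)

section Helpers

variable {R : Type*} [Ring R]

private lemma comm_inv {u U z : R} (h1 : u * U = 1) (h2 : U * u = 1)
    (hz : z * u = u * z) : z * U = U * z := by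
  calc z * U = ((U * u) * z) * U := by rw [h2, one_mul]
    _ = (U * (z * u)) * U := by rw [mul_assoc U u z, hz]
    _ = (U * z) * (u * U) := by simp only [mul_assoc]
    _ = U * z := by rw [h1, mul_one]

private lemma comm_sub1 {z w : R} (h : z * w = w * z) : z * (1 - w) = (1 - w) * z := by
  rw [mul_sub, sub_mul, mul_one, one_mul, h]

private lemma comm_add1 {z w : R} (h : z * w = w * z) : z * (1 + w) = (1 + w) * z := by
  rw [mul_add, add_mul, mul_one, one_mul, h]

private lemma cancel_sub_left {t u v : R} (h : t - u = t - v) : u = v := by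
  calc u = t - (t - u) := by abel
    _ = t - (t - v) := by rw [h]
    _ = v := by abel

private lemma isUnit_conj {w W Z : R} (h1 : w * W = 1) (h2 : W * w = 1) (hZ : IsUnit Z) :
    IsUnit (w * Z * W) := by
  have hWw : ∀ z : R, W * (w * z) = z := fun z => by rw [← mul_assoc, h2, one_mul]
  obtain ⟨E, hE1, hE2⟩ := isUnit_iff_exists.mp hZ
  have hZE : ∀ z : R, Z * (E * z) = z := fun z => by rw [← mul_assoc, hE1, one_mul]
  have hEZ : ∀ z : R, E * (Z * z) = z := fun z => by rw [← mul_assoc, hE2, one_mul]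
  refine isUnit_iff_exists.mpr ⟨w * E * W, ?_, ?_⟩
  · calc (w * Z * W) * (w * E * W) = w * (Z * (W * (w * (E * W)))) := by simp only [mul_assoc]
      _ = 1 := by rw [hWw, hZE, h1]
  · calc (w * E * W) * (w * Z * W) = w * (E * (W * (w * (Z * W)))) := by simp only [mul_assoc]
      _ = 1 := by rw [hWw, hEZ, h1]

private lemma jacobson_unit {a b : R} (h : IsUnit (1 + a * b)) : IsUnit (1 + b * a) := by
  obtain ⟨e, he1, he2⟩ := isUnit_iff_exists.mp h
  have key1 : a * b * e = 1 - e := by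
    have h' : e + a * b * e = 1 := by rw [add_mul, one_mul] at he1; exact he1
    calc a * b * e = (e + a * b * e) - e := by abel
      _ = 1 - e := by rw [h']
  have key2 : e * (a * b) = 1 - e := by
    have h' : e + e * (a * b) = 1 := by rw [mul_add, mul_one] at he2; exact he2
    calc e * (a * b) = (e + e * (a * b)) - e := by abel
      _ = 1 - e := by rw [h']
  refine isUnit_iff_exists.mpr ⟨1 - b * e * a, ?_, ?_⟩
  · calc (1 + b * a) * (1 - b * e * a)
        = 1 + b * a - b * e * a - b * ((a * b * e) * a) := by noncomm_ring
      _ = 1 + b * a - b * e * a - b * ((1 - e) * a) := by rw [key1]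
      _ = 1 := by noncomm_ring
  · calc (1 - b * e * a) * (1 + b * a)
        = 1 + b * a - b * e * a - b * ((e * (a * b)) * a) := by noncomm_ring
      _ = 1 + b * a - b * e * a - b * ((1 - e) * a) := by rw [key2]
      _ = 1 := by noncomm_ring

private lemma qn_conj {n w W : R} (h : Quasinilpotent n) (h1 : w * W = 1) (h2 : W * w = 1) :
    Quasinilpotent (w * n * W) := by
  have hwW : ∀ z : R, w * (W * z) = z := fun z => by rw [← mul_assoc, h1, one_mul]
  have hWw : ∀ z : R, W * (w * z) = z := fun z => by rw [← mul_assoc, h2, one_mul]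
  intro t ht
  have ht' : ∀ z : R, t * (w * (n * (W * z))) = w * (n * (W * (t * z))) := by
    intro z
    calc t * (w * (n * (W * z))) = (t * (w * n * W)) * z := by simp only [mul_assoc]
      _ = ((w * n * W) * t) * z := by rw [ht]
      _ = w * (n * (W * (t * z))) := by simp only [mul_assoc]
  have hcomm : (W * (t * w)) * n = n * (W * (t * w)) := by
    calc (W * (t * w)) * n = W * (t * (w * (n * (W * (w * 1))))) := by
          rw [hWw, mul_one]; simp only [mul_assoc]
      _ = W * (w * (n * (W * (t * (w * 1))))) := by rw [ht']
      _ = n * (W * (t * w)) := by rw [hWw, mul_one]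
  have hu := h (W * (t * w)) hcomm
  have heq : 1 + (w * n * W) * t = w * (1 + n * (W * (t * w))) * W := by
    have e1 : w * (1 + n * (W * (t * w))) * W = w * W + w * (n * (W * (t * (w * W)))) := by
      simp only [mul_add, add_mul, mul_one, mul_assoc]
    rw [e1, h1, mul_one]
    have e2 : (w * n * W) * t = w * (n * (W * t)) := by simp only [mul_assoc]
    rw [e2]
  rw [heq]
  exact isUnit_conj h1 h2 hu

private lemma gdrazin_conj {γ y w W : R} (h : IsGDrazin γ y) (h1 : w * W = 1) (h2 : W * w = 1) :
    IsGDrazin (w * γ * W) (w * y * W) := by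
  have hwW : ∀ z : R, w * (W * z) = z := fun z => by rw [← mul_assoc, h1, one_mul]
  have hWw : ∀ z : R, W * (w * z) = z := fun z => by rw [← mul_assoc, h2, one_mul]
  obtain ⟨hy1, hy2, hy3⟩ := h
  refine ⟨?_, ?_, ?_⟩
  · calc w * y * W = w * ((y * γ * y) * W) := by rw [← hy1, mul_assoc]
      _ = w * (y * (γ * (y * W))) := by simp only [mul_assoc]
      _ = w * (y * (W * (w * (γ * (W * (w * (y * W))))))) := by rw [hWw, hWw]
      _ = (w * y * W) * (w * γ * W) * (w * y * W) := by simp only [mul_assoc]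
  · intro t ht
    have ht' : ∀ z : R, t * (w * (γ * (W * z))) = w * (γ * (W * (t * z))) := by
      intro z
      calc t * (w * (γ * (W * z))) = (t * (w * γ * W)) * z := by simp only [mul_assoc]
        _ = ((w * γ * W) * t) * z := by rw [ht]
        _ = w * (γ * (W * (t * z))) := by simp only [mul_assoc]
    have hcomm : (W * (t * w)) * γ = γ * (W * (t * w)) := by
      calc (W * (t * w)) * γ = W * (t * (w * (γ * (W * (w * 1))))) := by
            rw [hWw, mul_one]; simp only [mul_assoc]
        _ = W * (w * (γ * (W * (t * (w * 1))))) := by rw [ht']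
        _ = γ * (W * (t * w)) := by rw [hWw, mul_one]
    have hyt := hy2 (W * (t * w)) hcomm
    calc (w * y * W) * t = w * ((y * (W * (t * w))) * W) := by
          rw [show (w * y * W) * t = w * (y * (W * (t * (w * W)))) by rw [h1, mul_one]; simp only [mul_assoc]]
          simp only [mul_assoc]
      _ = w * (((W * (t * w)) * y) * W) := by rw [hyt]
      _ = (w * (W * (t * (w * (y * W))))) := by simp only [mul_assoc]
      _ = t * (w * y * W) := by rw [hwW]; simp only [mul_assoc]
  · have heq : w * γ * W - (w * γ * W) ^ 2 * (w * y * W) = w * (γ - γ ^ 2 * y) * W := by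
      have e1 : (w * γ * W) ^ 2 * (w * y * W) = w * (γ ^ 2 * y) * W := by
        calc (w * γ * W) ^ 2 * (w * y * W) = (w * γ * W) * ((w * γ * W) * (w * y * W)) := by
              rw [pow_two, mul_assoc]
          _ = w * (γ * (W * (w * (γ * (W * (w * (y * W))))))) := by simp only [mul_assoc]
          _ = w * (γ * (γ * (y * W))) := by rw [hWw, hWw]
          _ = w * (γ ^ 2 * y) * W := by rw [pow_two]; simp only [mul_assoc]
      rw [e1, mul_sub, sub_mul]
    rw [heq]
    exact qn_conj hy3 h1 h2

private lemma quasipolar_gdrazin {γ Q U : R} (hQQ : Q * Q = Q)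
    (hcomm : ∀ t : R, t * γ = γ * t → t * Q = Q * t)
    (hU1 : (γ + Q) * U = 1) (hU2 : U * (γ + Q) = 1)
    (hqn : Quasinilpotent (γ * Q)) : ∃ y : R, IsGDrazin γ y := by
  have hQγ : γ * Q = Q * γ := hcomm γ rfl
  have hUγ : γ * U = U * γ := comm_inv hU1 hU2 (by rw [mul_add, add_mul, hQγ])
  have hUQ : Q * U = U * Q := comm_inv hU1 hU2 (by rw [mul_add, add_mul, hQγ, hQQ])
  have h1Q : (1 - Q) * (1 - Q) = 1 - Q := by
    calc (1 - Q) * (1 - Q) = 1 - Q - Q + Q * Q := by noncomm_ring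
      _ = 1 - Q := by rw [hQQ]; abel
  have hswap : (1 - Q) * U = U * (1 - Q) := by
    rw [sub_mul, mul_sub, one_mul, mul_one, hUQ]
  have hkey : (γ + Q) * (1 - Q) = γ * (1 - Q) := by
    calc (γ + Q) * (1 - Q) = γ * (1 - Q) + (Q - Q * Q) := by noncomm_ring
      _ = γ * (1 - Q) := by rw [hQQ]; abel
  have hγy : γ * (U * (1 - Q)) = 1 - Q := by
    calc γ * (U * (1 - Q)) = (γ * U) * (1 - Q) := by rw [mul_assoc]
      _ = U * (γ * (1 - Q)) := by rw [hUγ, mul_assoc]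
      _ = U * ((γ + Q) * (1 - Q)) := by rw [hkey]
      _ = (U * (γ + Q)) * (1 - Q) := by rw [mul_assoc]
      _ = 1 - Q := by rw [hU2, one_mul]
  have hyγ : (U * (1 - Q)) * γ = 1 - Q := by
    have hs : (1 - Q) * γ = γ * (1 - Q) := by rw [sub_mul, mul_sub, one_mul, mul_one, hQγ]
    calc (U * (1 - Q)) * γ = U * ((1 - Q) * γ) := by rw [mul_assoc]
      _ = U * (γ * (1 - Q)) := by rw [hs]
      _ = U * ((γ + Q) * (1 - Q)) := by rw [hkey]
      _ = (U * (γ + Q)) * (1 - Q) := by rw [mul_assoc]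
      _ = 1 - Q := by rw [hU2, one_mul]
  refine ⟨U * (1 - Q), ?_, ?_, ?_⟩
  · calc U * (1 - Q) = U * ((1 - Q) * (1 - Q)) := by rw [h1Q]
      _ = ((1 - Q) * U) * (1 - Q) := by rw [hswap]; simp only [mul_assoc]
      _ = ((U * (1 - Q)) * γ) * (U * (1 - Q)) := by rw [hyγ, ← mul_assoc]
      _ = (U * (1 - Q)) * γ * (U * (1 - Q)) := by simp only [mul_assoc]
  · intro t ht
    have htQ := hcomm t ht
    have htU : t * U = U * t := comm_inv hU1 hU2 (by rw [mul_add, add_mul, ht, htQ])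
    have h1 : (1 - Q) * t = t * (1 - Q) := by
      rw [sub_mul, mul_sub, one_mul, mul_one, htQ]
    calc (U * (1 - Q)) * t = U * ((1 - Q) * t) := by rw [mul_assoc]
      _ = U * (t * (1 - Q)) := by rw [h1]
      _ = (U * t) * (1 - Q) := by rw [mul_assoc]
      _ = t * (U * (1 - Q)) := by rw [← htU, mul_assoc]
  · have heq : γ - γ ^ 2 * (U * (1 - Q)) = γ * Q := by
      calc γ - γ ^ 2 * (U * (1 - Q)) = γ - γ * (γ * (U * (1 - Q))) := by rw [pow_two, mul_assoc]
        _ = γ - γ * (1 - Q) := by rw [hγy]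
        _ = γ * Q := by noncomm_ring
    rw [heq]
    exact hqn

private lemma lemmaA {a b x : R} (hx : IsGDrazin (1 - a * b) x) :
    ∃ y : R, IsGDrazin (1 - b * a) y := by
  obtain ⟨hx1, hx2, hx3⟩ := hx
  set α := (1 : R) - a * b with hαdef
  set β := (1 : R) - b * a with hβdef
  have hab : a * b = 1 - α := by rw [hαdef, sub_sub_cancel]
  have hβb : β * b = b * α := by rw [hαdef, hβdef]; noncomm_ring
  have hxα : x * α = α * x := hx2 α rfl
  obtain ⟨p, hpdef⟩ : ∃ p : R, p = 1 - α * x := ⟨_, rfl⟩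
  have hαxx : α * (x * x) = x := by
    calc α * (x * x) = (α * x) * x := (mul_assoc _ _ _).symm
      _ = (x * α) * x := by rw [hxα]
      _ = x := hx1.symm
  have hpx : p * x = 0 := by
    rw [hpdef, sub_mul, one_mul, mul_assoc, hαxx, sub_self]
  have hxp : x * p = 0 := by
    have h' : x * (α * x) = x := by rw [← mul_assoc]; exact hx1.symm
    rw [hpdef, mul_sub, mul_one, h', sub_self]
  have hpα : p * α = α * p := by
    rw [hpdef]
    calc (1 - α * x) * α = α - α * (x * α) := by noncomm_ring
      _ = α - α * (α * x) := by rw [hxα]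
      _ = α * (1 - α * x) := by noncomm_ring
  have haxax : (α * x) * (α * x) = α * x := by
    calc (α * x) * (α * x) = α * (x * α * x) := by simp only [mul_assoc]
      _ = α * x := by rw [← hx1]
  have hpp : p * p = p := by
    rw [hpdef]
    calc (1 - α * x) * (1 - α * x) = 1 - α * x - α * x + (α * x) * (α * x) := by noncomm_ring
      _ = 1 - α * x := by rw [haxax]; abel
  obtain ⟨n, hndef⟩ : ∃ n : R, n = α * p := ⟨_, rfl⟩
  have hqn_n : Quasinilpotent n := by
    have he : n = α - α ^ 2 * x := by
      rw [hndef, hpdef, mul_sub, mul_one, pow_two, mul_assoc]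
    rw [he]; exact hx3
  have hnα : n * α = α * n := by
    rw [hndef, mul_assoc, hpα, ← mul_assoc]
  have hnx : n * x = 0 := by rw [hndef, mul_assoc, hpx, mul_zero]
  have hxn : x * n = 0 := by
    rw [hndef, ← mul_assoc, hxα, mul_assoc, hxp, mul_zero]
  have hnp : n * p = n := by rw [hndef, mul_assoc, hpp]
  have hpn : p * n = n := by rw [hndef, ← mul_assoc, hpα, mul_assoc, hpp, ← hndef]
  have hUm : IsUnit (1 - n) := by
    have h := hqn_n (-1) (by rw [neg_one_mul, mul_neg_one])
    rwa [mul_neg_one, ← sub_eq_add_neg] at h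
  obtain ⟨m, hm1, hm2⟩ := isUnit_iff_exists.mp hUm
  have hUv : IsUnit (1 + n) := by
    have h := hqn_n 1 (by rw [one_mul, mul_one])
    rwa [mul_one] at h
  obtain ⟨v, hv1, hv2⟩ := isUnit_iff_exists.mp hUv
  have hcm : ∀ z : R, z * n = n * z → z * m = m * z := fun z hz =>
    comm_inv hm1 hm2 (comm_sub1 hz)
  have hcv : ∀ z : R, z * n = n * z → z * v = v * z := fun z hz =>
    comm_inv hv1 hv2 (by rw [mul_add, add_mul, mul_one, one_mul, hz])
  have hmα : α * m = m * α := hcm α hnα.symm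
  have hmx : x * m = m * x := hcm x (by rw [hxn, hnx])
  have hmp : p * m = m * p := hcm p (by rw [hpn, hnp])
  have hmn : n * m = m * n := hcm n rfl
  have hvα : α * v = v * α := hcv α hnα.symm
  have hvp : p * v = v * p := hcv p (by rw [hpn, hnp])
  have hm_eq : m = 1 + n * m := by
    have h' : m - n * m = 1 := by
      have h'' := hm1; rw [sub_mul, one_mul] at h''; exact h''
    calc m = (m - n * m) + n * m := by abel
      _ = 1 + n * m := by rw [h']
  have e1 : (1 - α) * p = (1 - n) * p := by
    have h1 : (1 - α) * p = p - n := by rw [hndef]; noncomm_ring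
    have h2 : (1 - n) * p = p - n := by rw [sub_mul, one_mul, hnp]
    rw [h1, h2]
  have hm1α : (1 - α) * m = m * (1 - α) := (comm_sub1 hmα.symm).symm
  obtain ⟨k, hkdef⟩ : ∃ k : R, k = m * p := ⟨_, rfl⟩
  have hG6 : (1 - α) * k = p := by
    rw [hkdef]
    calc (1 - α) * (m * p) = ((1 - α) * m) * p := (mul_assoc _ _ _).symm
      _ = (m * (1 - α)) * p := by rw [hm1α]
      _ = m * ((1 - α) * p) := mul_assoc _ _ _
      _ = m * ((1 - n) * p) := by rw [e1]
      _ = (m * (1 - n)) * p := (mul_assoc _ _ _).symm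
      _ = p := by rw [hm2, one_mul]
  have hkα : k * α = α * k := by
    rw [hkdef]
    calc (m * p) * α = m * (p * α) := mul_assoc _ _ _
      _ = (m * α) * p := by rw [hpα, ← mul_assoc]
      _ = (α * m) * p := by rw [hmα]
      _ = α * (m * p) := mul_assoc _ _ _
  have hkp : k * p = k := by rw [hkdef, mul_assoc, hpp]
  have hαk : α * k = n * m := by
    rw [hkdef]
    calc α * (m * p) = (α * m) * p := (mul_assoc _ _ _).symm
      _ = (m * α) * p := by rw [hmα]
      _ = m * (α * p) := mul_assoc _ _ _
      _ = m * n := by rw [← hndef]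
      _ = n * m := by rw [hmn]
  -- A1 : idempotent
  have Fabk : ∀ z : R, a * (b * (k * z)) = p * z := fun z => by
    calc a * (b * (k * z)) = ((a * b) * k) * z := by simp only [mul_assoc]
      _ = ((1 - α) * k) * z := by rw [hab]
      _ = p * z := by rw [hG6]
  have hqq : (b * (k * a)) * (b * (k * a)) = b * (k * a) := by
    calc (b * (k * a)) * (b * (k * a)) = b * (k * (a * (b * (k * a)))) := by
          simp only [mul_assoc]
      _ = b * (k * (p * a)) := by rw [Fabk]
      _ = b * ((k * p) * a) := by rw [← mul_assoc k p a]
      _ = b * (k * a) := by rw [hkp]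
  -- A2 : double commutant
  have hqcomm : ∀ t : R, t * β = β * t → t * (b * (k * a)) = (b * (k * a)) * t := by
    intro t ht
    have hbat : t * (b * a) = (b * a) * t := by
      calc t * (b * a) = t - t * β := by rw [hβdef]; noncomm_ring
        _ = t - β * t := by rw [ht]
        _ = (b * a) * t := by rw [hβdef]; noncomm_ring
    have hrab : (a * (t * b)) * (a * b) = (a * b) * (a * (t * b)) := by
      calc (a * (t * b)) * (a * b) = a * ((t * (b * a)) * b) := by simp only [mul_assoc]
        _ = a * (((b * a) * t) * b) := by rw [hbat]
        _ = (a * b) * (a * (t * b)) := by simp only [mul_assoc]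
    have hrα : (a * (t * b)) * α = α * (a * (t * b)) := by
      calc (a * (t * b)) * α = a * (t * b) - (a * (t * b)) * (a * b) := by
            rw [hαdef]; noncomm_ring
        _ = a * (t * b) - (a * b) * (a * (t * b)) := by rw [hrab]
        _ = α * (a * (t * b)) := by rw [hαdef]; noncomm_ring
    have hrx : x * (a * (t * b)) = (a * (t * b)) * x := hx2 _ hrα
    have hrp : (a * (t * b)) * p = p * (a * (t * b)) := by
      calc (a * (t * b)) * p = a * (t * b) - ((a * (t * b)) * α) * x := by
            rw [hpdef]; noncomm_ring
        _ = a * (t * b) - (α * (a * (t * b))) * x := by rw [hrα]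
        _ = a * (t * b) - α * ((a * (t * b)) * x) := by rw [mul_assoc]
        _ = a * (t * b) - α * (x * (a * (t * b))) := by rw [← hrx]
        _ = p * (a * (t * b)) := by rw [hpdef]; noncomm_ring
    have hrn : (a * (t * b)) * n = n * (a * (t * b)) := by
      rw [hndef]
      calc (a * (t * b)) * (α * p) = ((a * (t * b)) * α) * p := (mul_assoc _ _ _).symm
        _ = (α * (a * (t * b))) * p := by rw [hrα]
        _ = α * ((a * (t * b)) * p) := mul_assoc _ _ _
        _ = α * (p * (a * (t * b))) := by rw [hrp]
        _ = (α * p) * (a * (t * b)) := (mul_assoc _ _ _).symm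
    have hrm : (a * (t * b)) * m = m * (a * (t * b)) := hcm _ hrn
    have hrk : (a * (t * b)) * k = k * (a * (t * b)) := by
      rw [hkdef]
      calc (a * (t * b)) * (m * p) = ((a * (t * b)) * m) * p := (mul_assoc _ _ _).symm
        _ = (m * (a * (t * b))) * p := by rw [hrm]
        _ = m * ((a * (t * b)) * p) := mul_assoc _ _ _
        _ = m * (p * (a * (t * b))) := by rw [hrp]
        _ = (m * p) * (a * (t * b)) := (mul_assoc _ _ _).symm
    have hrk2 : (m * k) * (a * (t * b)) = (a * (t * b)) * (m * k) := by
      calc (m * k) * (a * (t * b)) = m * (k * (a * (t * b))) := mul_assoc _ _ _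
        _ = m * ((a * (t * b)) * k) := by rw [hrk]
        _ = (m * (a * (t * b))) * k := (mul_assoc _ _ _).symm
        _ = ((a * (t * b)) * m) * k := by rw [hrm]
        _ = (a * (t * b)) * (m * k) := mul_assoc _ _ _
    have hk2α : (m * k) * α = α * (m * k) := by
      calc (m * k) * α = m * (k * α) := mul_assoc _ _ _
        _ = (m * α) * k := by rw [hkα, ← mul_assoc]
        _ = (α * m) * k := by rw [hmα]
        _ = α * (m * k) := mul_assoc _ _ _
    have habk2 : (a * b) * (m * k) = k := by
      rw [hab]
      calc (1 - α) * (m * k) = ((1 - α) * m) * k := (mul_assoc _ _ _).symm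
        _ = (m * (1 - α)) * k := by rw [hm1α]
        _ = m * ((1 - α) * k) := mul_assoc _ _ _
        _ = m * p := by rw [hG6]
        _ = k := hkdef.symm
    have Fk : ∀ z : R, (m * k) * (a * (b * z)) = k * z := fun z => by
      calc (m * k) * (a * (b * z)) = ((m * k) * (a * b)) * z := by simp only [mul_assoc]
        _ = ((a * b) * (m * k)) * z := by
            rw [show (m * k) * (a * b) = (a * b) * (m * k) by
              rw [hab]; exact comm_sub1 hk2α]
        _ = k * z := by rw [habk2]
    have Fk' : ∀ z : R, a * (b * ((m * k) * z)) = k * z := fun z => by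
      calc a * (b * ((m * k) * z)) = ((a * b) * (m * k)) * z := by simp only [mul_assoc]
        _ = k * z := by rw [habk2]
    have F1 : ∀ z : R, t * (b * (a * z)) = b * (a * (t * z)) := fun z => by
      calc t * (b * (a * z)) = (t * (b * a)) * z := by simp only [mul_assoc]
        _ = ((b * a) * t) * z := by rw [hbat]
        _ = b * (a * (t * z)) := by simp only [mul_assoc]
    have Fr : ∀ z : R, (m * k) * (a * (t * (b * z))) = a * (t * (b * ((m * k) * z))) :=
      fun z => by
      calc (m * k) * (a * (t * (b * z))) = ((m * k) * (a * (t * b))) * z := by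
            simp only [mul_assoc]
        _ = ((a * (t * b)) * (m * k)) * z := by rw [hrk2]
        _ = a * (t * (b * ((m * k) * z))) := by simp only [mul_assoc]
    calc t * (b * (k * a)) = t * (b * (a * (b * ((m * k) * a)))) := by rw [Fk' a]
      _ = b * (a * (t * (b * ((m * k) * a)))) := F1 _
      _ = b * ((m * k) * (a * (t * (b * a)))) := by rw [← Fr a]
      _ = b * ((m * k) * (a * ((b * a) * t))) := by rw [hbat]
      _ = b * ((m * k) * (a * (b * (a * t)))) := by simp only [mul_assoc]
      _ = b * (k * (a * t)) := by rw [Fk]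
      _ = (b * (k * a)) * t := by simp only [mul_assoc]
  -- A3 : quasinilpotency of β*q
  have hβqe : β * (b * (k * a)) = b * ((n * m) * a) := by
    calc β * (b * (k * a)) = (β * b) * (k * a) := (mul_assoc _ _ _).symm
      _ = (b * α) * (k * a) := by rw [hβb]
      _ = b * ((α * k) * a) := by simp only [mul_assoc]
      _ = b * ((n * m) * a) := by rw [hαk]
  have hqns : ∀ t' : R, t' * (n * m) = (n * m) * t' → IsUnit (1 + (n * m) * t') := by
    intro t' ht'
    have htm : t' * m = m * t' := by
      have h1 : t' * (1 + n * m) = (1 + n * m) * t' := by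
        rw [mul_add, add_mul, mul_one, one_mul, ht']
      rw [hm_eq]; exact h1
    have ht1n : t' * (1 - n) = (1 - n) * t' := comm_inv hm2 hm1 htm
    have htn : t' * n = n * t' := by
      have h' := ht1n
      rw [mul_sub, sub_mul, mul_one, one_mul] at h'
      exact cancel_sub_left h'
    have hmtn : (m * t') * n = n * (m * t') := by
      calc (m * t') * n = m * (n * t') := by rw [mul_assoc, htn]
        _ = (m * n) * t' := (mul_assoc _ _ _).symm
        _ = (n * m) * t' := by rw [hmn]
        _ = n * (m * t') := mul_assoc _ _ _
    have hu := hqn_n (m * t') hmtn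
    rw [mul_assoc n m t']
    exact hu
  have hs1 : (n * m) * (a * b) = n := by
    rw [hab, ← hαk]
    calc (α * k) * (1 - α) = α * (k * (1 - α)) := mul_assoc _ _ _
      _ = α * ((1 - α) * k) := by rw [comm_sub1 hkα]
      _ = α * p := by rw [hG6]
      _ = n := hndef.symm
  have hs2 : (a * b) * (n * m) = n := by
    rw [hab, ← hαk]
    calc (1 - α) * (α * k) = ((1 - α) * α) * k := (mul_assoc _ _ _).symm
      _ = (α * (1 - α)) * k := by rw [show (1 - α) * α = α * (1 - α) by noncomm_ring]
      _ = α * ((1 - α) * k) := mul_assoc _ _ _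
      _ = α * p := by rw [hG6]
      _ = n := hndef.symm
  have hqnβq : Quasinilpotent (β * (b * (k * a))) := by
    rw [hβqe]
    intro t ht
    have e3 : (a * (t * b)) * ((n * m) * (a * b)) = a * ((t * (b * ((n * m) * a))) * b) := by
      simp only [mul_assoc]
    have e4 : a * (((b * ((n * m) * a)) * t) * b) = ((a * b) * (n * m)) * (a * (t * b)) := by
      simp only [mul_assoc]
    have key : (a * (t * b)) * n = n * (a * (t * b)) := by
      calc (a * (t * b)) * n = (a * (t * b)) * ((n * m) * (a * b)) := by rw [hs1]
        _ = a * ((t * (b * ((n * m) * a))) * b) := e3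
        _ = a * (((b * ((n * m) * a)) * t) * b) := by rw [ht]
        _ = ((a * b) * (n * m)) * (a * (t * b)) := e4
        _ = n * (a * (t * b)) := by rw [hs2]
    have hrm' : (a * (t * b)) * m = m * (a * (t * b)) := hcm _ key
    have hsr : (a * (t * b)) * (n * m) = (n * m) * (a * (t * b)) := by
      calc (a * (t * b)) * (n * m) = ((a * (t * b)) * n) * m := (mul_assoc _ _ _).symm
        _ = (n * (a * (t * b))) * m := by rw [key]
        _ = n * ((a * (t * b)) * m) := mul_assoc _ _ _
        _ = n * (m * (a * (t * b))) := by rw [hrm']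
        _ = (n * m) * (a * (t * b)) := (mul_assoc _ _ _).symm
    have hu : IsUnit (1 + (n * m) * (a * (t * b))) := hqns _ hsr
    have hu2 : IsUnit (1 + ((n * m) * (a * t)) * b) := by
      rw [show ((n * m) * (a * t)) * b = (n * m) * (a * (t * b)) by simp only [mul_assoc]]
      exact hu
    have hu3 := jacobson_unit hu2
    rw [show (1 : R) + (b * ((n * m) * a)) * t = 1 + b * ((n * m) * (a * t)) by
      simp only [mul_assoc]]
    exact hu3
  -- A4 : unit
  obtain ⟨u', hu'def⟩ : ∃ u' : R, u' = x + v * p := ⟨_, rfl⟩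
  have c1 : α * (v * p) = v * n := by
    calc α * (v * p) = (α * v) * p := (mul_assoc _ _ _).symm
      _ = (v * α) * p := by rw [hvα]
      _ = v * (α * p) := mul_assoc _ _ _
      _ = v * n := by rw [← hndef]
  have c2 : p * (v * p) = v * p := by
    calc p * (v * p) = (p * v) * p := (mul_assoc _ _ _).symm
      _ = (v * p) * p := by rw [hvp]
      _ = v * (p * p) := mul_assoc _ _ _
      _ = v * p := by rw [hpp]
  have c3 : v * n + v * p = p := by
    calc v * n + v * p = v * (n + p) := by rw [mul_add]
      _ = v * ((1 + n) * p) := by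
          rw [show n + p = (1 + n) * p by rw [add_mul, one_mul, hnp]; abel]
      _ = (v * (1 + n)) * p := (mul_assoc _ _ _).symm
      _ = p := by rw [hv2, one_mul]
  have hG3 : (α + p) * u' = 1 := by
    rw [hu'def]
    calc (α + p) * (x + v * p)
        = α * x + α * (v * p) + (p * x + p * (v * p)) := by noncomm_ring
      _ = α * x + v * n + (0 + v * p) := by rw [c1, hpx, c2]
      _ = α * x + (v * n + v * p) := by abel
      _ = α * x + p := by rw [c3]
      _ = 1 := by rw [hpdef]; abel
  have c4 : (v * p) * α = v * n := by
    calc (v * p) * α = v * (p * α) := mul_assoc _ _ _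
      _ = v * (α * p) := by rw [hpα]
      _ = v * n := by rw [← hndef]
  have hG4 : u' * (α + p) = 1 := by
    rw [hu'def]
    calc (x + v * p) * (α + p)
        = x * α + x * p + ((v * p) * α + (v * p) * p) := by noncomm_ring
      _ = α * x + 0 + (v * n + (v * p) * p) := by rw [hxα, hxp, c4]
      _ = α * x + 0 + (v * n + v * (p * p)) := by rw [mul_assoc]
      _ = α * x + (v * n + v * p) := by rw [hpp]; abel
      _ = α * x + p := by rw [c3]
      _ = 1 := by rw [hpdef]; abel
  have m1 : (1 : R) - (1 - α) * (1 - k) = α + p := by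
    have h' : (1 - α) * (1 - k) = (1 - α) - (1 - α) * k := by noncomm_ring
    rw [h', hG6]; abel
  have hform : β + b * (k * a) = 1 - b * ((1 - k) * a) := by rw [hβdef]; noncomm_ring
  have key1 : (1 - k) * (u' * a) - (1 - k) * ((1 - α) * ((1 - k) * (u' * a)))
      = (1 - k) * a := by
    calc (1 - k) * (u' * a) - (1 - k) * ((1 - α) * ((1 - k) * (u' * a)))
        = (1 - k) * ((1 - (1 - α) * (1 - k)) * (u' * a)) := by noncomm_ring
      _ = (1 - k) * ((α + p) * (u' * a)) := by rw [m1]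
      _ = (1 - k) * (((α + p) * u') * a) := by rw [← mul_assoc (α + p) u' a]
      _ = (1 - k) * a := by rw [hG3, one_mul]
  have key2 : (1 - k) * (u' * a) - (1 - k) * (u' * ((1 - α) * ((1 - k) * a)))
      = (1 - k) * a := by
    calc (1 - k) * (u' * a) - (1 - k) * (u' * ((1 - α) * ((1 - k) * a)))
        = (1 - k) * ((u' * (1 - (1 - α) * (1 - k))) * a) := by noncomm_ring
      _ = (1 - k) * ((u' * (α + p)) * a) := by rw [m1]
      _ = (1 - k) * a := by rw [hG4, one_mul]
  have hW1 : (β + b * (k * a)) * (1 + b * (((1 - k) * u') * a)) = 1 := by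
    rw [hform]
    calc (1 - b * ((1 - k) * a)) * (1 + b * (((1 - k) * u') * a))
        = 1 + b * ((1 - k) * (u' * a)) - b * ((1 - k) * a)
            - b * ((1 - k) * ((a * b) * ((1 - k) * (u' * a)))) := by noncomm_ring
      _ = 1 + b * ((1 - k) * (u' * a)) - b * ((1 - k) * a)
            - b * ((1 - k) * ((1 - α) * ((1 - k) * (u' * a)))) := by rw [hab]
      _ = 1 + b * ((1 - k) * (u' * a) - (1 - k) * ((1 - α) * ((1 - k) * (u' * a))))
            - b * ((1 - k) * a) := by noncomm_ring
      _ = 1 + b * ((1 - k) * a) - b * ((1 - k) * a) := by rw [key1]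
      _ = 1 := by abel
  have hW2 : (1 + b * (((1 - k) * u') * a)) * (β + b * (k * a)) = 1 := by
    rw [hform]
    calc (1 + b * (((1 - k) * u') * a)) * (1 - b * ((1 - k) * a))
        = 1 + b * ((1 - k) * (u' * a)) - b * ((1 - k) * a)
            - b * ((1 - k) * (u' * ((a * b) * ((1 - k) * a)))) := by noncomm_ring
      _ = 1 + b * ((1 - k) * (u' * a)) - b * ((1 - k) * a)
            - b * ((1 - k) * (u' * ((1 - α) * ((1 - k) * a)))) := by rw [hab]
      _ = 1 + b * ((1 - k) * (u' * a) - (1 - k) * (u' * ((1 - α) * ((1 - k) * a))))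
            - b * ((1 - k) * a) := by noncomm_ring
      _ = 1 + b * ((1 - k) * a) - b * ((1 - k) * a) := by rw [key2]
      _ = 1 := by abel
  exact quasipolar_gdrazin hqq hqcomm hW1 hW2 hqnβq

private lemma lemmaBtilde {β x d : R} (hx1 : x = x * β * x)
    (hx2 : ∀ z : R, z * β = β * z → x * z = z * x)
    (hx3 : Quasinilpotent (β - β ^ 2 * x))
    (hβd : β * d = d) (hxd : x * d = d)
    (hdP : d * (1 - β * x) = 0) (hdd : d * d = 0) :
    ∃ y : R, IsGDrazin (β + d) y := by
  have hxβ : x * β = β * x := hx2 β rfl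
  obtain ⟨p, hpdef⟩ : ∃ p : R, p = 1 - β * x := ⟨_, rfl⟩
  have hβxx : β * (x * x) = x := by
    calc β * (x * x) = (β * x) * x := (mul_assoc _ _ _).symm
      _ = (x * β) * x := by rw [hxβ]
      _ = x := hx1.symm
  have hpx : p * x = 0 := by
    rw [hpdef, sub_mul, one_mul, mul_assoc, hβxx, sub_self]
  have hxp : x * p = 0 := by
    have h' : x * (β * x) = x := by rw [← mul_assoc]; exact hx1.symm
    rw [hpdef, mul_sub, mul_one, h', sub_self]
  have hpβ : p * β = β * p := by
    rw [hpdef]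
    calc (1 - β * x) * β = β - β * (x * β) := by noncomm_ring
      _ = β - β * (β * x) := by rw [hxβ]
      _ = β * (1 - β * x) := by noncomm_ring
  have hbxbx : (β * x) * (β * x) = β * x := by
    calc (β * x) * (β * x) = β * (x * β * x) := by simp only [mul_assoc]
      _ = β * x := by rw [← hx1]
  have hpp : p * p = p := by
    rw [hpdef]
    calc (1 - β * x) * (1 - β * x) = 1 - β * x - β * x + (β * x) * (β * x) := by noncomm_ring
      _ = 1 - β * x := by rw [hbxbx]; abel
  obtain ⟨n, hndef⟩ : ∃ n : R, n = β * p := ⟨_, rfl⟩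
  have hqn_n : Quasinilpotent n := by
    have he : n = β - β ^ 2 * x := by
      rw [hndef, hpdef, mul_sub, mul_one, pow_two, mul_assoc]
    rw [he]; exact hx3
  have hnp : n * p = n := by rw [hndef, mul_assoc, hpp]
  have hpn : p * n = n := by rw [hndef, ← mul_assoc, hpβ, mul_assoc, hpp, ← hndef]
  have hnβ : n * β = β * n := by rw [hndef, mul_assoc, hpβ, ← mul_assoc]
  have hUm : IsUnit (1 - n) := by
    have h := hqn_n (-1) (by rw [neg_one_mul, mul_neg_one])
    rwa [mul_neg_one, ← sub_eq_add_neg] at h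
  obtain ⟨m, hm1, hm2⟩ := isUnit_iff_exists.mp hUm
  have hUv : IsUnit (1 + n) := by
    have h := hqn_n 1 (by rw [one_mul, mul_one])
    rwa [mul_one] at h
  obtain ⟨v, hv1, hv2⟩ := isUnit_iff_exists.mp hUv
  have hcm : ∀ z : R, z * n = n * z → z * m = m * z := fun z hz =>
    comm_inv hm1 hm2 (comm_sub1 hz)
  have hcv : ∀ z : R, z * n = n * z → z * v = v * z := fun z hz =>
    comm_inv hv1 hv2 (by rw [mul_add, add_mul, mul_one, one_mul, hz])
  have hmβ : β * m = m * β := hcm β hnβ.symm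
  have hmp : p * m = m * p := hcm p (by rw [hpn, hnp])
  have hvβ : β * v = v * β := hcv β hnβ.symm
  have hvp : p * v = v * p := hcv p (by rw [hpn, hnp])
  have hm_eq : m = 1 + n * m := by
    have h' : m - n * m = 1 := by
      have h'' := hm1; rw [sub_mul, one_mul] at h''; exact h''
    calc m = (m - n * m) + n * m := by abel
      _ = 1 + n * m := by rw [h']
  -- d facts
  have hPd : p * d = 0 := by
    rw [hpdef, sub_mul, one_mul, mul_assoc, hxd, hβd, sub_self]
  have hdp : d * p = 0 := by rw [hpdef]; exact hdP
  have hnd : n * d = 0 := by rw [hndef, mul_assoc, hPd, mul_zero]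
  have hdn : d * n = 0 := by rw [hndef, ← hpβ, ← mul_assoc, hdp, zero_mul]
  have hmd : m * d = d := by
    have h1 : (1 - n) * d = d := by rw [sub_mul, one_mul, hnd, sub_zero]
    calc m * d = m * ((1 - n) * d) := by rw [h1]
      _ = (m * (1 - n)) * d := (mul_assoc _ _ _).symm
      _ = d := by rw [hm2, one_mul]
  have hβxp : β * x = 1 - p := by rw [hpdef, sub_sub_cancel]
  have hPβ : p * β = n := by rw [hpβ, ← hndef]
  -- unit: (β + d + p) * (x - d*x + v*p) = 1 and reverse
  have c2 : p * (v * p) = v * p := by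
    calc p * (v * p) = (p * v) * p := (mul_assoc _ _ _).symm
      _ = (v * p) * p := by rw [hvp]
      _ = v * (p * p) := mul_assoc _ _ _
      _ = v * p := by rw [hpp]
  have c3 : v * n + v * p = p := by
    calc v * n + v * p = v * (n + p) := by rw [mul_add]
      _ = v * ((1 + n) * p) := by
          rw [show n + p = (1 + n) * p by rw [add_mul, one_mul, hnp]; abel]
      _ = (v * (1 + n)) * p := (mul_assoc _ _ _).symm
      _ = p := by rw [hv2, one_mul]
  have t1 : β * (x - d * x + v * p) = β * x - d * x + v * n := by
    have a1 : β * (d * x) = d * x := by rw [← mul_assoc, hβd]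
    have a2 : β * (v * p) = v * n := by
      calc β * (v * p) = (β * v) * p := (mul_assoc _ _ _).symm
        _ = (v * β) * p := by rw [hvβ]
        _ = v * (β * p) := mul_assoc _ _ _
        _ = v * n := by rw [← hndef]
    calc β * (x - d * x + v * p) = β * x - β * (d * x) + β * (v * p) := by noncomm_ring
      _ = β * x - d * x + v * n := by rw [a1, a2]
  have t2 : d * (x - d * x + v * p) = d * x := by
    have b1 : d * (d * x) = 0 := by rw [← mul_assoc, hdd, zero_mul]
    have b2 : d * (v * p) = 0 := by rw [← hvp, ← mul_assoc, hdp, zero_mul]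
    calc d * (x - d * x + v * p) = d * x - d * (d * x) + d * (v * p) := by noncomm_ring
      _ = d * x := by rw [b1, b2]; abel
  have t3 : p * (x - d * x + v * p) = v * p := by
    have b1 : p * (d * x) = 0 := by rw [← mul_assoc, hPd, zero_mul]
    calc p * (x - d * x + v * p) = p * x - p * (d * x) + p * (v * p) := by noncomm_ring
      _ = v * p := by rw [hpx, b1, c2]; abel
  have hU1 : ((β + d) + p) * (x - d * x + v * p) = 1 := by
    calc ((β + d) + p) * (x - d * x + v * p)
        = β * (x - d * x + v * p) + d * (x - d * x + v * p) + p * (x - d * x + v * p) := by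
          noncomm_ring
      _ = (β * x - d * x + v * n) + d * x + v * p := by rw [t1, t2, t3]
      _ = β * x + (v * n + v * p) := by abel
      _ = β * x + p := by rw [c3]
      _ = 1 := by rw [hβxp]; abel
  have s1 : x * ((β + d) + p) = β * x + d := by
    calc x * ((β + d) + p) = x * β + x * d + x * p := by noncomm_ring
      _ = β * x + d + 0 := by rw [hxβ, hxd, hxp]
      _ = β * x + d := by abel
  have s2 : (d * x) * ((β + d) + p) = d := by
    have b1 : (d * x) * β = d := by
      calc (d * x) * β = d * (x * β) := mul_assoc _ _ _
        _ = d * (β * x) := by rw [hxβ]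
        _ = d * (1 - p) := by rw [hβxp]
        _ = d - d * p := by rw [mul_sub, mul_one]
        _ = d := by rw [hdp, sub_zero]
    have b2 : (d * x) * d = 0 := by
      calc (d * x) * d = d * (x * d) := mul_assoc _ _ _
        _ = d * d := by rw [hxd]
        _ = 0 := hdd
    have b3 : (d * x) * p = 0 := by
      calc (d * x) * p = d * (x * p) := mul_assoc _ _ _
        _ = 0 := by rw [hxp, mul_zero]
    calc (d * x) * ((β + d) + p) = (d * x) * β + (d * x) * d + (d * x) * p := by noncomm_ring
      _ = d + 0 + 0 := by rw [b1, b2, b3]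
      _ = d := by abel
  have s3 : (v * p) * ((β + d) + p) = p := by
    have b1 : (v * p) * β = v * n := by
      calc (v * p) * β = v * (p * β) := mul_assoc _ _ _
        _ = v * n := by rw [hPβ]
    have b2 : (v * p) * d = 0 := by
      calc (v * p) * d = v * (p * d) := mul_assoc _ _ _
        _ = 0 := by rw [hPd, mul_zero]
    have b3 : (v * p) * p = v * p := by
      calc (v * p) * p = v * (p * p) := mul_assoc _ _ _
        _ = v * p := by rw [hpp]
    calc (v * p) * ((β + d) + p) = (v * p) * β + (v * p) * d + (v * p) * p := by noncomm_ring
      _ = v * n + 0 + v * p := by rw [b1, b2, b3]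
      _ = v * n + v * p := by abel
      _ = p := c3
  have hU2 : (x - d * x + v * p) * ((β + d) + p) = 1 := by
    calc (x - d * x + v * p) * ((β + d) + p)
        = x * ((β + d) + p) - (d * x) * ((β + d) + p) + (v * p) * ((β + d) + p) := by
          noncomm_ring
      _ = (β * x + d) - d + p := by rw [s1, s2, s3]
      _ = β * x + p := by abel
      _ = 1 := by rw [hβxp]; abel
  -- the key double-commutant property
  have hcomm : ∀ t : R, t * (β + d) = (β + d) * t → t * p = p * t := by
    intro t ht
    have hPβd : p * (β + d) = n := by rw [mul_add, hPd, add_zero, hPβ]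
    have he : (β + d) * (t * d) = t * d := by
      calc (β + d) * (t * d) = ((β + d) * t) * d := (mul_assoc _ _ _).symm
        _ = (t * (β + d)) * d := by rw [ht]
        _ = t * ((β + d) * d) := mul_assoc _ _ _
        _ = t * d := by rw [add_mul, hβd, hdd, add_zero]
    have h1 : p * (t * d) = n * (t * d) := by
      calc p * (t * d) = p * ((β + d) * (t * d)) := by rw [he]
        _ = (p * (β + d)) * (t * d) := (mul_assoc _ _ _).symm
        _ = n * (t * d) := by rw [hPβd]
    have h2 : n * (t * d) = n * (p * (t * d)) := by
      calc n * (t * d) = (n * p) * (t * d) := by rw [hnp]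
        _ = n * (p * (t * d)) := mul_assoc _ _ _
    have h3 : (1 - n) * (p * (t * d)) = 0 := by
      rw [sub_mul, one_mul, ← h2, ← h1, sub_self]
    have mA : p * (t * d) = 0 := by
      calc p * (t * d) = (m * (1 - n)) * (p * (t * d)) := by rw [hm2, one_mul]
        _ = m * ((1 - n) * (p * (t * d))) := mul_assoc _ _ _
        _ = 0 := by rw [h3, mul_zero]
    have hB0 : p * (t * (β + d)) = n * t := by
      calc p * (t * (β + d)) = p * ((β + d) * t) := by rw [ht]
        _ = (p * (β + d)) * t := (mul_assoc _ _ _).symm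
        _ = n * t := by rw [hPβd]
    have mB : p * (t * β) = n * t := by
      have e : p * (t * (β + d)) = p * (t * β) + p * (t * d) := by rw [mul_add, mul_add]
      calc p * (t * β) = p * (t * (β + d)) - p * (t * d) := by rw [e]; abel
        _ = n * t - 0 := by rw [hB0, mA]
        _ = n * t := by abel
    have mC : (β + d) * (t * p) = t * n := by
      calc (β + d) * (t * p) = ((β + d) * t) * p := (mul_assoc _ _ _).symm
        _ = (t * (β + d)) * p := by rw [ht]
        _ = t * ((β + d) * p) := mul_assoc _ _ _
        _ = t * n := by rw [add_mul, hdp, add_zero, ← hndef]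
    have mD : p * (t * n) = n * (t * p) := by
      calc p * (t * n) = p * ((β + d) * (t * p)) := by rw [mC]
        _ = (p * (β + d)) * (t * p) := (mul_assoc _ _ _).symm
        _ = n * (t * p) := by rw [hPβd]
    have hcp : ∀ z : R, z * β = β * z → z * x = x * z → z * p = p * z := by
      intro z hzβ' hzx'
      calc z * p = z - (z * β) * x := by rw [hpdef]; noncomm_ring
        _ = z - (β * z) * x := by rw [hzβ']
        _ = z - β * (z * x) := by rw [mul_assoc]
        _ = z - β * (x * z) := by rw [hzx']
        _ = p * z := by rw [hpdef]; noncomm_ring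
    -- C1 : p*t = p*(t*p)
    have l2 : (p * (t * p)) * β = p * (t * n) := by
      calc (p * (t * p)) * β = p * (t * (p * β)) := by simp only [mul_assoc]
        _ = p * (t * n) := by rw [hPβ]
    have hzβ : (p * t - p * (t * p)) * β = β * (p * t - p * (t * p)) := by
      have r1 : (p * t) * β = p * (t * β) := mul_assoc _ _ _
      have r3 : β * (p * t) = n * t := by rw [← mul_assoc, ← hndef]
      have r4 : β * (p * (t * p)) = n * (t * p) := by rw [← mul_assoc, ← hndef]
      calc (p * t - p * (t * p)) * β = p * (t * β) - p * (t * n) := by rw [sub_mul, r1, l2]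
        _ = n * t - n * (t * p) := by rw [mB, mD]
        _ = β * (p * t) - β * (p * (t * p)) := by rw [r3, r4]
        _ = β * (p * t - p * (t * p)) := by rw [mul_sub]
    have hzx : x * (p * t - p * (t * p)) = (p * t - p * (t * p)) * x := hx2 _ hzβ
    have hzP : (p * t - p * (t * p)) * p = p * (p * t - p * (t * p)) := hcp _ hzβ hzx.symm
    have hzP0 : (p * t - p * (t * p)) * p = 0 := by
      have w1 : (p * t) * p = p * (t * p) := mul_assoc _ _ _
      have w2 : (p * (t * p)) * p = p * (t * p) := by
        calc (p * (t * p)) * p = p * (t * (p * p)) := by simp only [mul_assoc]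
          _ = p * (t * p) := by rw [hpp]
      rw [sub_mul, w1, w2, sub_self]
    have hPz : p * (p * t - p * (t * p)) = p * t - p * (t * p) := by
      have w1 : p * (p * t) = p * t := by rw [← mul_assoc, hpp]
      have w2 : p * (p * (t * p)) = p * (t * p) := by rw [← mul_assoc, hpp]
      rw [mul_sub, w1, w2]
    have hC1 : p * t = p * (t * p) := by
      have hz0 : p * t - p * (t * p) = 0 := by rw [← hPz, ← hzP, hzP0]
      exact sub_eq_zero.mp hz0
    -- C2 : t*p = p*(t*p)
    obtain ⟨T, hTdef⟩ : ∃ T : R, T = t * p - p * (t * p) := ⟨_, rfl⟩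
    have hTn : T * n = t * n - p * (t * n) := by
      rw [hTdef]
      have w1 : (t * p) * n = t * n := by rw [mul_assoc, hpn]
      have w2 : (p * (t * p)) * n = p * (t * n) := by
        calc (p * (t * p)) * n = p * (t * (p * n)) := by simp only [mul_assoc]
          _ = p * (t * n) := by rw [hpn]
      rw [sub_mul, w1, w2]
    have hTβn : T * β = T * n := by
      rw [hTdef]
      have w1 : (t * p) * β = t * n := by rw [mul_assoc, hPβ]
      have w2 : (t * p - p * (t * p)) * β = t * n - p * (t * n) := by
        rw [sub_mul, w1, l2]
      rw [w2, ← hTn, hTdef]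
    have hdT : d * T = d * (t * p) := by
      rw [hTdef]
      have w2 : d * (p * (t * p)) = 0 := by rw [← mul_assoc, hdp, zero_mul]
      rw [mul_sub, w2, sub_zero]
    have hβT : β * T = T * n - d * T := by
      rw [hTdef]
      have w1 : β * (t * p) = t * n - d * (t * p) := by
        have e : (β + d) * (t * p) = β * (t * p) + d * (t * p) := by rw [add_mul]
        calc β * (t * p) = (β + d) * (t * p) - d * (t * p) := by rw [e]; abel
          _ = t * n - d * (t * p) := by rw [mC]
      have w2 : β * (p * (t * p)) = n * (t * p) := by rw [← mul_assoc, ← hndef]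
      calc β * (t * p - p * (t * p)) = β * (t * p) - β * (p * (t * p)) := by rw [mul_sub]
        _ = (t * n - d * (t * p)) - n * (t * p) := by rw [w1, w2]
        _ = (t * n - p * (t * n)) - d * (t * p) := by rw [← mD]; abel
        _ = (t * p - p * (t * p)) * n - d * (t * p - p * (t * p)) := by
            rw [← hTdef, hTn, hdT]
    have hm_eq2 : m - 1 = n * m := by
      calc m - 1 = 1 + n * m - 1 := by rw [← hm_eq]
        _ = n * m := by abel
    obtain ⟨Z, hZdef⟩ : ∃ Z : R, Z = T + d * (T * m) := ⟨_, rfl⟩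
    have hZβ : Z * β = β * Z := by
      have q1 : (d * (T * m)) * β = d * ((T * n) * m) := by
        calc (d * (T * m)) * β = d * (T * (m * β)) := by simp only [mul_assoc]
          _ = d * (T * (β * m)) := by rw [← hmβ]
          _ = d * ((T * β) * m) := by simp only [mul_assoc]
          _ = d * ((T * n) * m) := by rw [hTβn]
      have q2 : β * (d * (T * m)) = d * (T * m) := by rw [← mul_assoc, hβd]
      have q3 : d * (T * m) - d * T = d * ((T * n) * m) := by
        calc d * (T * m) - d * T = d * (T * m - T) := by rw [mul_sub]
          _ = d * (T * (m - 1)) := by rw [show T * m - T = T * (m - 1) by rw [mul_sub, mul_one]]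
          _ = d * (T * (n * m)) := by rw [hm_eq2]
          _ = d * ((T * n) * m) := by rw [← mul_assoc T n m]
      calc Z * β = T * β + (d * (T * m)) * β := by rw [hZdef, add_mul]
        _ = T * n + d * ((T * n) * m) := by rw [hTβn, q1]
        _ = T * n + (d * (T * m) - d * T) := by rw [q3]
        _ = (T * n - d * T) + d * (T * m) := by abel
        _ = β * T + β * (d * (T * m)) := by rw [← hβT, q2]
        _ = β * Z := by rw [hZdef, mul_add]
    have hZx : x * Z = Z * x := hx2 _ hZβ
    have hZp : Z * p = p * Z := hcp _ hZβ hZx.symm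
    have hTp : T * p = T := by
      rw [hTdef]
      have w1 : (t * p) * p = t * p := by rw [mul_assoc, hpp]
      have w2 : (p * (t * p)) * p = p * (t * p) := by
        calc (p * (t * p)) * p = p * (t * (p * p)) := by simp only [mul_assoc]
          _ = p * (t * p) := by rw [hpp]
      rw [sub_mul, w1, w2]
    have hPT : p * T = 0 := by
      rw [hTdef]
      have w1 : p * (t * p) = p * (t * p) := rfl
      have w2 : p * (p * (t * p)) = p * (t * p) := by rw [← mul_assoc, hpp]
      rw [mul_sub, w2, sub_self]
    have hPZ : p * Z = 0 := by
      have w2 : p * (d * (T * m)) = 0 := by rw [← mul_assoc, hPd, zero_mul]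
      rw [hZdef, mul_add, hPT, w2, add_zero]
    have hZp1 : Z * p = Z := by
      have w2 : (d * (T * m)) * p = d * (T * m) := by
        calc (d * (T * m)) * p = d * (T * (m * p)) := by simp only [mul_assoc]
          _ = d * (T * (p * m)) := by rw [← hmp]
          _ = d * ((T * p) * m) := by simp only [mul_assoc]
          _ = d * (T * m) := by rw [hTp]
      rw [hZdef, add_mul, hTp, w2]
    have hZ0 : Z = 0 := by rw [← hZp1, hZp, hPZ]
    have hTneg : T = -(d * (T * m)) := by
      have h' : T + d * (T * m) = 0 := by rw [← hZdef, hZ0]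
      exact eq_neg_of_add_eq_zero_left h'
    have hdT0 : d * T = 0 := by
      calc d * T = d * (-(d * (T * m))) := by rw [← hTneg]
        _ = -(d * (d * (T * m))) := by rw [mul_neg]
        _ = -((d * d) * (T * m)) := by rw [mul_assoc]
        _ = 0 := by rw [hdd, zero_mul, neg_zero]
    have hT0 : T = 0 := by
      calc T = -(d * (T * m)) := hTneg
        _ = -((d * T) * m) := by rw [mul_assoc]
        _ = 0 := by rw [hdT0, zero_mul, neg_zero]
    have hC2 : t * p = p * (t * p) := by
      have h' : t * p - p * (t * p) = 0 := by rw [← hTdef, hT0]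
      exact sub_eq_zero.mp h'
    rw [hC2, ← hC1]
  -- quasinilpotency
  have hqn : Quasinilpotent ((β + d) * p) := by
    have he : (β + d) * p = n := by rw [add_mul, hdp, add_zero, ← hndef]
    rw [he]; exact hqn_n
  exact quasipolar_gdrazin hpp hcomm hU1 hU2 hqn

private lemma lemmaB {β x d : R} (hx : IsGDrazin β x) (hβd : β * d = d) (hdd : d * d = 0) :
    ∃ y : R, IsGDrazin (β + d) y := by
  obtain ⟨hx1, hx2, hx3⟩ := hx
  have hxβ : x * β = β * x := hx2 β rfl
  obtain ⟨p, hpdef⟩ : ∃ p : R, p = 1 - β * x := ⟨_, rfl⟩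
  have hβxx : β * (x * x) = x := by
    calc β * (x * x) = (β * x) * x := (mul_assoc _ _ _).symm
      _ = (x * β) * x := by rw [hxβ]
      _ = x := hx1.symm
  have hpβ : p * β = β * p := by
    rw [hpdef]
    calc (1 - β * x) * β = β - β * (x * β) := by noncomm_ring
      _ = β - β * (β * x) := by rw [hxβ]
      _ = β * (1 - β * x) := by noncomm_ring
  have hbxbx : (β * x) * (β * x) = β * x := by
    calc (β * x) * (β * x) = β * (x * β * x) := by simp only [mul_assoc]
      _ = β * x := by rw [← hx1]
  have hpp : p * p = p := by
    rw [hpdef]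
    calc (1 - β * x) * (1 - β * x) = 1 - β * x - β * x + (β * x) * (β * x) := by noncomm_ring
      _ = 1 - β * x := by rw [hbxbx]; abel
  obtain ⟨n, hndef⟩ : ∃ n : R, n = β * p := ⟨_, rfl⟩
  have hqn_n : Quasinilpotent n := by
    have he : n = β - β ^ 2 * x := by
      rw [hndef, hpdef, mul_sub, mul_one, pow_two, mul_assoc]
    rw [he]; exact hx3
  have hnp : n * p = n := by rw [hndef, mul_assoc, hpp]
  have hUm : IsUnit (1 - n) := by
    have h := hqn_n (-1) (by rw [neg_one_mul, mul_neg_one])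
    rwa [mul_neg_one, ← sub_eq_add_neg] at h
  obtain ⟨m, hm1, hm2⟩ := isUnit_iff_exists.mp hUm
  have hβxp : β * x = 1 - p := by rw [hpdef, sub_sub_cancel]
  -- derive p*d = 0
  have e1 : p * d = n * d := by
    calc p * d = p * (β * d) := by rw [hβd]
      _ = (p * β) * d := (mul_assoc _ _ _).symm
      _ = n * d := by rw [hpβ, ← hndef]
  have e2 : n * d = n * (p * d) := by
    calc n * d = (n * p) * d := by rw [hnp]
      _ = n * (p * d) := mul_assoc _ _ _
  have e3 : (1 - n) * (p * d) = 0 := by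
    rw [sub_mul, one_mul, ← e2, ← e1, sub_self]
  have hPd : p * d = 0 := by
    calc p * d = (m * (1 - n)) * (p * d) := by rw [hm2, one_mul]
      _ = m * ((1 - n) * (p * d)) := mul_assoc _ _ _
      _ = 0 := by rw [e3, mul_zero]
  have hnd : n * d = 0 := by rw [← e1, hPd]
  have hxd : x * d = d := by
    calc x * d = x * (β * d) := by rw [hβd]
      _ = (x * β) * d := (mul_assoc _ _ _).symm
      _ = (β * x) * d := by rw [hxβ]
      _ = (1 - p) * d := by rw [hβxp]
      _ = d - p * d := by rw [sub_mul, one_mul]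
      _ = d := by rw [hPd, sub_zero]
  have hmd : m * d = d := by
    have h1 : (1 - n) * d = d := by rw [sub_mul, one_mul, hnd, sub_zero]
    calc m * d = m * ((1 - n) * d) := by rw [h1]
      _ = (m * (1 - n)) * d := (mul_assoc _ _ _).symm
      _ = d := by rw [hm2, one_mul]
  -- normalized perturbation d'
  obtain ⟨d', hd'def⟩ : ∃ d' : R, d' = d * (m * (β - n)) := ⟨_, rfl⟩
  have f0 : (m * (β - n)) * d = d := by
    calc (m * (β - n)) * d = m * ((β - n) * d) := mul_assoc _ _ _
      _ = m * (β * d - n * d) := by rw [sub_mul]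
      _ = m * d := by rw [hβd, hnd, sub_zero]
      _ = d := hmd
  have hβd' : β * d' = d' := by rw [hd'def, ← mul_assoc, hβd]
  have hxd' : x * d' = d' := by rw [hd'def, ← mul_assoc, hxd]
  have hd'P : d' * (1 - β * x) = 0 := by
    rw [← hpdef]
    have g1 : (β - n) * p = 0 := by rw [sub_mul, ← hndef, hnp, sub_self]
    calc d' * p = d * ((m * (β - n)) * p) := by rw [hd'def, mul_assoc]
      _ = d * (m * ((β - n) * p)) := by rw [mul_assoc m (β - n) p]
      _ = 0 := by rw [g1, mul_zero, mul_zero]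
  have hd'd' : d' * d' = 0 := by
    calc d' * d' = d * ((m * (β - n)) * (d * (m * (β - n)))) := by
          rw [hd'def]; simp only [mul_assoc]
      _ = d * (((m * (β - n)) * d) * (m * (β - n))) := by
          rw [← mul_assoc (m * (β - n)) d (m * (β - n))]
      _ = d * (d * (m * (β - n))) := by rw [f0]
      _ = (d * d) * (m * (β - n)) := (mul_assoc _ _ _).symm
      _ = 0 := by rw [hdd, zero_mul]
  obtain ⟨ty, hty⟩ := lemmaBtilde hx1 hx2 hx3 hβd' hxd' hd'P hd'd'
  -- conjugation
  have hdm2 : (d * m) * (d * m) = 0 := by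
    calc (d * m) * (d * m) = (d * (m * d)) * m := by simp only [mul_assoc]
      _ = (d * d) * m := by rw [hmd]
      _ = 0 := by rw [hdd, zero_mul]
  have hw1 : (1 - d * m) * (1 + d * m) = 1 := by
    calc (1 - d * m) * (1 + d * m) = 1 - (d * m) * (d * m) := by noncomm_ring
      _ = 1 := by rw [hdm2, sub_zero]
  have hw2 : (1 + d * m) * (1 - d * m) = 1 := by
    calc (1 + d * m) * (1 - d * m) = 1 - (d * m) * (d * m) := by noncomm_ring
      _ = 1 := by rw [hdm2, sub_zero]
  have hconj := gdrazin_conj hty hw1 hw2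
  have hA : (d * m) * d' = 0 := by
    calc (d * m) * d' = (d * (m * d)) * (m * (β - n)) := by
          rw [hd'def]; simp only [mul_assoc]
      _ = (d * d) * (m * (β - n)) := by rw [hmd]
      _ = 0 := by rw [hdd, zero_mul]
  have hB : β * (d * m) = d * m := by rw [← mul_assoc, hβd]
  have hC : d' * (d * m) = 0 := by
    calc d' * (d * m) = (d * ((m * (β - n)) * d)) * m := by
          rw [hd'def]; simp only [mul_assoc]
      _ = (d * d) * m := by rw [f0]
      _ = 0 := by rw [hdd, zero_mul]
  have hE : (d * m) * (β + d') = d * (m * β) := by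
    calc (d * m) * (β + d') = (d * m) * β + (d * m) * d' := by rw [mul_add]
      _ = d * (m * β) + 0 := by rw [mul_assoc, hA]
      _ = d * (m * β) := by rw [add_zero]
  have hD : (d * (m * β)) * (d * m) = 0 := by
    calc (d * (m * β)) * (d * m) = (d * (m * (β * d))) * m := by simp only [mul_assoc]
      _ = (d * (m * d)) * m := by rw [hβd]
      _ = (d * d) * m := by rw [hmd]
      _ = 0 := by rw [hdd, zero_mul]
  have hd'exp : d' = d * (m * β) - d * (m * n) := by
    rw [hd'def]
    calc d * (m * (β - n)) = d * (m * β - m * n) := by rw [mul_sub m β n]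
      _ = d * (m * β) - d * (m * n) := by rw [mul_sub]
  have hkey : d * m - d * (m * n) = d := by
    calc d * m - d * (m * n) = d * (m - m * n) := by rw [mul_sub]
      _ = d * (m * (1 - n)) := by rw [show m - m * n = m * (1 - n) by rw [mul_sub, mul_one]]
      _ = d := by rw [hm2, mul_one]
  have hF : (1 - d * m) * (β + d') * (1 + d * m) = β + d := by
    have step1 : (1 - d * m) * (β + d') = (β + d') - d * (m * β) := by
      calc (1 - d * m) * (β + d') = (β + d') - (d * m) * (β + d') := by noncomm_ring
        _ = (β + d') - d * (m * β) := by rw [hE]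
    have step3 : (β + d') * (d * m) = d * m := by
      rw [add_mul, hB, hC, add_zero]
    calc (1 - d * m) * (β + d') * (1 + d * m) = ((β + d') - d * (m * β)) * (1 + d * m) := by
          rw [step1]
      _ = (β + d') + (β + d') * (d * m) - d * (m * β) - (d * (m * β)) * (d * m) := by
          noncomm_ring
      _ = (β + d') + d * m - d * (m * β) - 0 := by rw [step3, hD]
      _ = β + ((d * (m * β) - d * (m * n)) + d * m - d * (m * β)) := by rw [hd'exp]; abel
      _ = β + (d * m - d * (m * n)) := by abel
      _ = β + d := by rw [hkey]
  rw [hF] at hconj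
  exact ⟨_, hconj⟩

end Helpers


theorem gdrazin_three_elements {R : Type*} [Ring R] (a b c : R)
    (h1 : (a * b * a) * b = (a * c * a) * b) (h2 : b * (a * b * a) = b * (a * c * a))
    (h3 : (a * b * a) * c = (a * c * a) * c) (h4 : c * (a * b * a) = c * (a * c * a)) :
    (∃ x : R, IsGDrazin (1 - b * a) x) ↔ (∃ y : R, IsGDrazin (1 - a * c) y) := by
  have k2 : (b * a) * (b * a) = (b * a) * (c * a) := by
    calc (b * a) * (b * a) = b * (a * b * a) := by simp only [mul_assoc]
      _ = b * (a * c * a) := h2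
      _ = (b * a) * (c * a) := by simp only [mul_assoc]
  have k4 : (c * a) * (b * a) = (c * a) * (c * a) := by
    calc (c * a) * (b * a) = c * (a * b * a) := by simp only [mul_assoc]
      _ = c * (a * c * a) := h4
      _ = (c * a) * (c * a) := by simp only [mul_assoc]
  constructor
  · rintro ⟨x, hx⟩
    have hβd : (1 - b * a) * (b * a - c * a) = b * a - c * a := by
      calc (1 - b * a) * (b * a - c * a)
          = (b * a - c * a) - ((b * a) * (b * a) - (b * a) * (c * a)) := by noncomm_ring
        _ = b * a - c * a := by rw [k2]; abel
    have hdd : (b * a - c * a) * (b * a - c * a) = 0 := by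
      calc (b * a - c * a) * (b * a - c * a)
          = ((b * a) * (b * a) - (b * a) * (c * a)) - ((c * a) * (b * a) - (c * a) * (c * a)) := by
            noncomm_ring
        _ = 0 := by rw [k2, k4]; abel
    obtain ⟨y1, hy1⟩ := lemmaB hx hβd hdd
    have he : (1 : R) - b * a + (b * a - c * a) = 1 - c * a := by abel
    rw [he] at hy1
    exact lemmaA (a := c) (b := a) hy1
  · rintro ⟨y, hy⟩
    obtain ⟨z, hz⟩ := lemmaA (a := a) (b := c) hy
    have hβd : (1 - c * a) * (c * a - b * a) = c * a - b * a := by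
      calc (1 - c * a) * (c * a - b * a)
          = (c * a - b * a) - ((c * a) * (c * a) - (c * a) * (b * a)) := by noncomm_ring
        _ = c * a - b * a := by rw [k4]; abel
    have hdd2 : (c * a - b * a) * (c * a - b * a) = 0 := by
      calc (c * a - b * a) * (c * a - b * a)
          = ((c * a) * (c * a) - (c * a) * (b * a)) - ((b * a) * (c * a) - (b * a) * (b * a)) := by
            noncomm_ring
        _ = 0 := by rw [k2, k4]; abel
    obtain ⟨y1, hy1⟩ := lemmaB hz hβd hdd2
    have he : (1 : R) - c * a + (c * a - b * a) = 1 - b * a := by abel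
    rw [he] at hy1
    exact ⟨y1, hy1⟩
end

section
/- Let R be a ring, n a positive integer, and a,b,c ∈ R satisfy (aba)b = (aca)b, b(aba) = b(aca), (aba)c = (aca)c, and c(aba) = c(aca). Then (1-ba)^n has a generalized Drazin inverse if and only if (1-ac)^n has a generalized Drazin inverse. -/
section Helpers
variable {R : Type*} [Ring R]

/-- Build `IsUnit` from an explicit two-sided inverse. -/
theorem isUnit_of_mul_eq_one_of_mul_eq_one {x y : R} (h1 : x * y = 1) (h2 : y * x = 1) :
    IsUnit x := ⟨⟨x, y, h1, h2⟩, rfl⟩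

/-- Jacobson's lemma for units. -/
theorem isUnit_one_sub_swap {u v : R} (h : IsUnit (1 - u * v)) : IsUnit (1 - v * u) := by
  obtain ⟨w, hw⟩ := h
  have h1 : (1 - u * v) * ↑w⁻¹ = 1 := by rw [← hw]; exact w.mul_inv
  have h2 : (↑w⁻¹ : R) * (1 - u * v) = 1 := by rw [← hw]; exact w.inv_mul
  set ρ : R := ↑w⁻¹
  have h1' : u * (v * ρ) = ρ - 1 := by linear_combination (norm := noncomm_ring) -h1
  have h2' : ρ * (u * v) = ρ - 1 := by linear_combination (norm := noncomm_ring) -h2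
  refine isUnit_of_mul_eq_one_of_mul_eq_one (y := 1 + v * (ρ * u)) ?_ ?_
  · linear_combination (norm := noncomm_ring) -(v * h1' * u)
  · linear_combination (norm := noncomm_ring) -(v * h2' * u)

theorem commute_isUnit_inv {a v vi : R} (h : a * v = v * a) (hv1 : v * vi = 1)
    (hv2 : vi * v = 1) : a * vi = vi * a := by
  linear_combination (norm := noncomm_ring) -(vi * h * vi) + (vi * a) * hv1 - hv2 * (a * vi)

theorem Quasinilpotent.isUnit_one_sub {m : R} (hm : Quasinilpotent m) : IsUnit (1 - m) := by
  have := hm (-1) (by noncomm_ring)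
  rw [mul_neg, mul_one, ← sub_eq_add_neg] at this
  exact this

theorem Quasinilpotent.isUnit_one_add {m : R} (hm : Quasinilpotent m) : IsUnit (1 + m) := by
  have := hm 1 (by rw [one_mul, mul_one])
  rw [mul_one] at this
  exact this

/-- Jacobson's lemma for quasinilpotents. -/
theorem Quasinilpotent.swap {u v : R} (h : Quasinilpotent (u * v)) :
    Quasinilpotent (v * u) := by
  intro x hx
  -- hx : x * (v*u) = (v*u) * x
  have hcomm : (-(u * (x * (x * v)))) * (u * v) = (u * v) * (-(u * (x * (x * v)))) := by
    linear_combination (norm := noncomm_ring) -((u*x) * hx * v) - (u * hx * (x*v))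
  have h2 := h _ hcomm
  have e1 : 1 + (u*v) * (-(u * (x * (x * v)))) = 1 - u * ((v*u) * (x * (x * v))) := by
    noncomm_ring
  rw [e1] at h2
  have h3 := isUnit_one_sub_swap h2
  -- h3 : IsUnit (1 - ((v*u) * (x*(x*v))) * u)
  have e2 : 1 - ((v*u) * (x * (x * v))) * u = 1 - (v*u*x) * (v*u*x) := by
    linear_combination (norm := noncomm_ring) -((v*u*x) * hx)
  rw [e2] at h3
  obtain ⟨W, hW⟩ := h3
  have hW1 : (1 - (v*u*x) * (v*u*x)) * ↑W⁻¹ = 1 := by rw [← hW]; exact W.mul_inv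
  have hW2 : (↑W⁻¹ : R) * (1 - (v*u*x) * (v*u*x)) = 1 := by rw [← hW]; exact W.inv_mul
  have hr : (1 + v*u*x) * ((1 - v*u*x) * ↑W⁻¹) = 1 := by
    linear_combination (norm := noncomm_ring) hW1
  have hl : ((↑W⁻¹ : R) * (1 - v*u*x)) * (1 + v*u*x) = 1 := by
    linear_combination (norm := noncomm_ring) hW2
  have heq : (↑W⁻¹ : R) * (1 - v*u*x) = (1 - v*u*x) * ↑W⁻¹ := by
    calc (↑W⁻¹ : R) * (1 - v*u*x)
        = (↑W⁻¹ * (1 - v*u*x)) * ((1 + v*u*x) * ((1 - v*u*x) * ↑W⁻¹)) := by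
          rw [hr, mul_one]
      _ = ((↑W⁻¹ * (1 - v*u*x)) * (1 + v*u*x)) * ((1 - v*u*x) * ↑W⁻¹) := by noncomm_ring
      _ = (1 - v*u*x) * ↑W⁻¹ := by rw [hl, one_mul]
  exact isUnit_of_mul_eq_one_of_mul_eq_one (y := (1 - v*u*x) * ↑W⁻¹) hr (by rw [← heq]; exact hl)

end Helpers

set_option maxHeartbeats 2000000 in
theorem cross {R : Type*} [Ring R] (a b c : R)
    (hp : a*b*(a*b) = a*c*(a*b))
    (hq : a*b*(a*c) = a*c*(a*c))
    (hβ : b*a*(b*a) = b*a*(c*a))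
    (hγ : c*a*(b*a) = c*a*(c*a))
    (Y : R) (hY : IsGDrazin (1 - a*c) Y) :
    ∃ x : R, IsGDrazin (1 - b*a) x := by
  obtain ⟨hYa, hYc, hYq⟩ := hY
  have hYB : Y * (1 - a*c) = (1 - a*c) * Y := hYc _ rfl
  have hYq' : Y * (a*c) = (a*c) * Y := by
    linear_combination (norm := noncomm_ring) -hYB
  have commY : ∀ u : R, u * (a*c) = (a*c) * u → Y * u = u * Y := fun u hu =>
    hYc u (by linear_combination (norm := noncomm_ring) -hu)
  obtain ⟨f, hfdef⟩ : ∃ f : R, f = 1 - (1 - a*c) * Y := ⟨_, rfl⟩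
  have hff : f * f = f := by
    rw [hfdef]; linear_combination (norm := noncomm_ring) -((1 - a*c) * hYa)
  have hfY : f * Y = 0 := by
    rw [hfdef]; linear_combination (norm := noncomm_ring) hYa + hYB * Y
  have hYf : Y * f = 0 := by
    rw [hfdef]; linear_combination (norm := noncomm_ring) hYa
  have hfq : f * (a*c) = (a*c) * f := by
    rw [hfdef]; linear_combination (norm := noncomm_ring) -((1 - a*c) * hYq')
  obtain ⟨ν, hνdef⟩ : ∃ ν : R, ν = (1 - a*c) * f := ⟨_, rfl⟩
  have hνrw : (1 - a*c) - (1 - a*c)^2 * Y = ν := by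
    rw [hνdef, hfdef]; noncomm_ring
  have hqnilν : Quasinilpotent ν := by rw [← hνrw]; exact hYq
  have hνf : ν * f = ν := by
    rw [hνdef]; linear_combination (norm := noncomm_ring) (1 - a*c) * hff
  have hf1q : f * (1 - a*c) = (1 - a*c) * f := by
    linear_combination (norm := noncomm_ring) -hfq
  have hfν : f * ν = ν := by
    rw [hνdef]; linear_combination (norm := noncomm_ring) hf1q * f + (1 - a*c) * hff
  have hνq : ν * (a*c) = (a*c) * ν := by
    rw [hνdef]; linear_combination (norm := noncomm_ring) (1 - a*c) * hfq
  obtain ⟨W, hW⟩ := hqnilν.isUnit_one_sub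
  obtain ⟨w, hw1, hw2⟩ : ∃ w : R, (1 - ν) * w = 1 ∧ w * (1 - ν) = 1 :=
    ⟨↑W⁻¹, by rw [← hW]; exact W.mul_inv, by rw [← hW]; exact W.inv_mul⟩
  have hwν : ν * w = w * ν :=
    commute_isUnit_inv (by noncomm_ring) hw1 hw2
  have hwf : f * w = w * f :=
    commute_isUnit_inv (by linear_combination (norm := noncomm_ring) hνf - hfν) hw1 hw2
  have hwq : (a*c) * w = w * (a*c) :=
    commute_isUnit_inv (by linear_combination (norm := noncomm_ring) hνq) hw1 hw2
  -- key identities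
  have hfwv : f = f*w - ν*w := by
    linear_combination (norm := noncomm_ring) -(f * hw1) - hfν * w
  have k2 : (a*c) * (f*w) = f := by
    linear_combination (norm := noncomm_ring) -hfwv + hνdef * w
  have k2' : (f*w) * (a*c) = f := by
    linear_combination (norm := noncomm_ring) -(f * hwq) + hfq * w + k2
  have hk4a : (a*c) * (f*(w*w)) = f*w := by
    linear_combination (norm := noncomm_ring) k2 * w
  have k4 : (a*b) * (f*w) = f := by
    linear_combination (norm := noncomm_ring) -((a*b) * hk4a) + hq * (f*(w*w)) + (a*c) * hk4a + k2
  -- d-kills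
  have hdd : (a*b - a*c) * (a*b - a*c) = 0 := by
    linear_combination (norm := noncomm_ring) hp - hq
  have hdf : (a*b - a*c) * f = 0 := by
    linear_combination (norm := noncomm_ring) -((a*b - a*c) * k2) + hq * (f*w)
  have hdfw : (a*b - a*c) * (f*w) = 0 := by
    linear_combination (norm := noncomm_ring) hdf * w
  -- G
  obtain ⟨G, hGdef⟩ : ∃ G : R, G = b*(f*w)*a := ⟨_, rfl⟩
  have hfwf : (f*w) * f = f*w := by
    linear_combination (norm := noncomm_ring) -(f * hwf) + hff * w
  have hGG : G * G = G := by
    rw [hGdef]; linear_combination (norm := noncomm_ring) (b*(f*w)) * k4 * a + b * hfwf * a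
  have haG : a * G = f * a := by
    rw [hGdef]; linear_combination (norm := noncomm_ring) k4 * a
  have p3 : b*a*G = b*(f*a) := by
    rw [hGdef]; linear_combination (norm := noncomm_ring) b * k4 * a
  have hGγ : G*(c*a) = b*(f*a) := by
    rw [hGdef]; linear_combination (norm := noncomm_ring) b * k2' * a
  have hk2'' : (f*(w*w)) * (a*c) = f*w := by
    linear_combination (norm := noncomm_ring) -((f*w) * hwq) + k2' * w
  have hGform : G = b*(f*(w*w))*(a*(c*a)) := by
    rw [hGdef]; linear_combination (norm := noncomm_ring) -(b * hk2'' * a)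
  have hGβγ : G*(b*a) = G*(c*a) := by
    linear_combination (norm := noncomm_ring) hGform * (b*a) - hGform * (c*a) + (b*(f*(w*w))*a) * hγ
  have p4 : G*(b*a) = b*(f*a) := hGβγ.trans hGγ
  have hGba : G*(b*a) = (b*a)*G := p4.trans p3.symm
  -- t
  obtain ⟨t, htdef⟩ : ∃ t : R, t = G - b*(f*a) := ⟨_, rfl⟩
  have hαG : (1 - b*a)*G = t := by
    rw [htdef]; linear_combination (norm := noncomm_ring) -p3
  have hGα : G*(1 - b*a) = t := by
    rw [htdef]; linear_combination (norm := noncomm_ring) -p4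
  have htν : t = b*(ν*w)*a := by
    rw [htdef, hGdef]; linear_combination (norm := noncomm_ring) -(b * hfwv * a)
  have hpf : a*b*f = a*c*f := by
    linear_combination (norm := noncomm_ring) -((a*b) * k2) + hq * (f*w) + (a*c) * k2
  have haX : a*(b*(ν*w)) = ν := by
    linear_combination (norm := noncomm_ring) ((a*b) * hfwv) + k4 - hpf - hνdef
  have hqnilt : Quasinilpotent t := by
    have h1 : Quasinilpotent (a*(b*(ν*w))) := by rw [haX]; exact hqnilν
    have h2 := h1.swap
    have h3 : b*(ν*w)*a = t := htν.symm
    rw [← h3]; exact h2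
  have hGt : G*t = t := by
    rw [htdef]
    linear_combination (norm := noncomm_ring) hGG - hGdef * (b*(f*a)) - ((b*(f*w)) * hpf * a) - (b * k2' * (f*a)) - (b * hff * a)
  have htG : t*G = t := by
    rw [htdef]; linear_combination (norm := noncomm_ring) hGG - ((b*f) * haG) - (b * hff * a)
  -- commutation class lemmas
  have commf : ∀ u' : R, u'*(a*c) = (a*c)*u' → u'*f = f*u' := by
    intro u' hu'
    have CY := commY u' hu'
    rw [hfdef]
    linear_combination (norm := noncomm_ring) CY - (a*c)*CY + hu' * Y
  have commν : ∀ u' : R, u'*(a*c) = (a*c)*u' → u'*ν = ν*u' := by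
    intro u' hu'
    have CF := commf u' hu'
    rw [hνdef]
    linear_combination (norm := noncomm_ring) CF - (a*c)*CF - hu' * f
  have commw : ∀ u' : R, u'*(a*c) = (a*c)*u' → u'*w = w*u' := by
    intro u' hu'
    have CN := commν u' hu'
    exact commute_isUnit_inv (by linear_combination (norm := noncomm_ring) -CN) hw1 hw2
  have commF3 : ∀ u' : R, u'*(a*c) = (a*c)*u' → u'*(f*(w*(w*w))) = (f*(w*(w*w)))*u' := by
    intro u' hu'
    have CF := commf u' hu'
    have CW := commw u' hu'
    linear_combination (norm := noncomm_ring) CF*(w*(w*w)) + f*CW*(w*w) + (f*w)*CW*w + (f*(w*w))*CW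
  have hk4b : (a*c)*(f*(w*(w*w))) = f*(w*w) := by
    linear_combination (norm := noncomm_ring) k2 * (w*w)
  have hScomm : ∀ u : R, u*(c*a) = (c*a)*u → u*(c*(f*(w*w))*a) = (c*(f*(w*w))*a)*u := by
    intro u hu
    have hu' : (a*(u*c))*(a*c) = (a*c)*(a*(u*c)) := by
      linear_combination (norm := noncomm_ring) a * hu * c
    have h2 : (a*(u*c))*(f*(w*(w*w))) = (f*(w*(w*w)))*(a*(u*c)) := commF3 _ hu'
    have hcw := commw (a*c) rfl
    have hX'q : (f*(w*(w*w)))*(a*c) = (a*c)*(f*(w*(w*w))) := by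
      linear_combination (norm := noncomm_ring) hfq*(w*(w*w)) - f*hcw*(w*w) - (f*w)*hcw*w - (f*(w*w))*hcw
    have key : u*(c*((a*c)*(f*(w*(w*w))))*a) = (c*((a*c)*(f*(w*(w*w))))*a)*u := by
      linear_combination (norm := noncomm_ring) c*hX'q*(a*u) + (c*((f*(w*(w*w)))*a))*hu + c*h2*a + hu*(c*((f*(w*(w*w)))*a))
    linear_combination (norm := noncomm_ring) key - (u*c)*hk4b*a + c*hk4b*(a*u)
  -- evaluation identities
  have hSγ : (c*(f*(w*w))*a)*(c*a) = c*(f*w)*a := by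
    linear_combination (norm := noncomm_ring) c*hk2''*a
  have hg2γ : (c*(f*w)*a)*(c*a) = c*(f*a) := by
    linear_combination (norm := noncomm_ring) c*k2'*a
  have hg2form : c*(f*w)*a = c*(f*(w*w))*(a*(c*a)) := by
    linear_combination (norm := noncomm_ring) -(c*hk2''*a)
  have hg2βγ : (c*(f*w)*a)*(b*a) = (c*(f*w)*a)*(c*a) := by
    linear_combination (norm := noncomm_ring) hg2form*(b*a) - hg2form*(c*a) + (c*(f*(w*w))*a)*hγ
  have hg2β : (c*(f*w)*a)*(b*a) = c*(f*a) := hg2βγ.trans hg2γ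
  have hbaS : (b*a)*(c*(f*(w*w))*a) = G := by
    rw [hGdef]; linear_combination (norm := noncomm_ring) b*hk4a*a
  have hγG : (c*a)*G = c*(f*a) := by
    linear_combination (norm := noncomm_ring) (c*a)*hGdef + c*k4*a
  have ht2 : t = G - (b*a)*G := by
    linear_combination (norm := noncomm_ring) htdef + p3
  have hbfa : b*(f*a) = G - t := by
    linear_combination (norm := noncomm_ring) htdef
  obtain ⟨Ti, hTi⟩ := hqnilt.isUnit_one_sub
  obtain ⟨ti, hti1, hti2⟩ : ∃ ti : R, (1 - t) * ti = 1 ∧ ti * (1 - t) = 1 :=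
    ⟨↑Ti⁻¹, by rw [← hTi]; exact Ti.mul_inv, by rw [← hTi]; exact Ti.inv_mul⟩
  -- the double commutant property of G
  have hGzcomm : ∀ z : R, z*(b*a) = (b*a)*z → G*z = z*G := by
    intro z hz
    have hξ : ((c*a)*(z*(b*a)))*(c*a) = (c*a)*((c*a)*(z*(b*a))) := by
      linear_combination (norm := noncomm_ring) -((c*a)*z)*hβ + (c*a)*hz*(b*a) + ((c*a)*(b*a))*hz + hγ*((b*a)*z) - ((c*a)*(c*a))*hz
    have hSz := hScomm _ hξ
    have e1 : ((c*a)*(z*(b*a)))*(c*(f*(w*w))*a) = (c*a)*(z*G) := by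
      linear_combination (norm := noncomm_ring) ((c*a)*z)*hbaS
    have e2 : (c*(f*(w*w))*a)*((c*a)*(z*(b*a))) = (c*(f*a))*z := by
      linear_combination (norm := noncomm_ring) hSγ*(z*(b*a)) + (c*(f*w)*a)*hz + hg2β*z
    have X3 : (c*(f*a))*z = (c*a)*(z*G) := by
      linear_combination (norm := noncomm_ring) -e2 + e1 - hSz
    -- corner 2 : N = 0
    obtain ⟨N, hNdef⟩ : ∃ N : R, N = z*G - G*(z*G) := ⟨_, rfl⟩
    have hγN : (c*a)*N = 0 := by
      rw [hNdef]
      linear_combination (norm := noncomm_ring) -(hγG*(z*G)) - X3*G - ((c*a)*z)*hGG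
    have htzG : t*(z*G) = G*(z*t) := by
      linear_combination (norm := noncomm_ring) ht2*(z*G) - (G*z)*ht2 + G*hz*G + hGba*(z*G)
    have hβN : (b*a)*N = N - N*t := by
      rw [hNdef]
      linear_combination (norm := noncomm_ring) -hz*G + z*p3 + z*hbfa - p3*(z*G) - hbfa*(z*G) + z*hGt - (G*z)*hGt + htzG
    have hN2 : (b*a)*((b*a)*N) = 0 := by
      linear_combination (norm := noncomm_ring) hβ*N + (b*a)*hγN
    have hN3 : (b*a)*((b*a)*N) = N*((1-t)*(1-t)) := by
      linear_combination (norm := noncomm_ring) (b*a)*hβN + hβN*(1-t)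
    have hN4 : N*((1-t)*(1-t)) = 0 := hN3.symm.trans hN2
    have hN5 : N*(1-t) = 0 := by
      have h6 : N*(1-t) = (N*((1-t)*(1-t)))*ti := by
        linear_combination (norm := noncomm_ring) -((N*(1-t))*hti1)
      rw [hN4, zero_mul] at h6; exact h6
    have hNzero : N = 0 := by
      have h7 : N = (N*(1-t))*ti := by
        linear_combination (norm := noncomm_ring) -(N*hti1)
      rw [hN5, zero_mul] at h7; exact h7
    -- corner 1 : E = 0
    obtain ⟨E, hEdef⟩ : ∃ E : R, E = G*z - (G*z)*G := ⟨_, rfl⟩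
    have hγE : (c*a)*E = 0 := by
      rw [hEdef]
      linear_combination (norm := noncomm_ring) hγG*z - hγG*(z*G) + X3 - X3*G - (c*a)*z*hGG
    have hβE : (b*a)*E = E - t*E := by
      rw [hEdef]
      linear_combination (norm := noncomm_ring) p3*z - p3*(z*G) + hbfa*z - hbfa*(z*G) + htG*z - htG*(z*G)
    have hbat : (b*a)*t = t*(b*a) := by
      linear_combination (norm := noncomm_ring) (b*a)*ht2 - ht2*(b*a) - hGba + (b*a)*hGba
    have hE2 : (b*a)*((b*a)*E) = 0 := by
      linear_combination (norm := noncomm_ring) hβ*E + (b*a)*hγE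
    have hE3 : (b*a)*((b*a)*E) = (1-t)*((1-t)*E) := by
      linear_combination (norm := noncomm_ring) (b*a)*hβE + hβE - t*hβE - hbat*E
    have hE4 : (1-t)*((1-t)*E) = 0 := hE3.symm.trans hE2
    have hE5 : (1-t)*E = 0 := by
      have h6 : (1-t)*E = ti*((1-t)*((1-t)*E)) := by
        linear_combination (norm := noncomm_ring) -(hti2 * ((1-t)*E))
      rw [hE4, mul_zero] at h6; exact h6
    have hEzero : E = 0 := by
      have h7 : E = ti*((1-t)*E) := by
        linear_combination (norm := noncomm_ring) -(hti2 * E)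
      rw [hE5, mul_zero] at h7; exact h7
    linear_combination (norm := noncomm_ring) hEzero - hEdef - hNzero + hNdef
  -- the V-unit section
  obtain ⟨Tp, hTp⟩ := hqnilt.isUnit_one_add
  obtain ⟨tp, htp1, htp2⟩ : ∃ tp : R, (1 + t) * tp = 1 ∧ tp * (1 + t) = 1 :=
    ⟨↑Tp⁻¹, by rw [← hTp]; exact Tp.mul_inv, by rw [← hTp]; exact Tp.inv_mul⟩
  have hαx0 : (1 - b*a)*(1 + b*(Y - f*w)*a) = 1 - G - b*(((a*b)*Y - (a*c)*Y)*a) := by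
    linear_combination (norm := noncomm_ring) hGdef + b*k4*a + b*hfdef*a
  have hGx0 : G*(1 + b*(Y - f*w)*a) = b*(((f*w)*((a*b)*Y - (a*c)*Y))*a) := by
    linear_combination (norm := noncomm_ring) hGdef*(b*(Y - f*w)*a) + hGdef + b*(k2'*(Y*a)) + b*hfY*a - (b*(f*w))*k4*a - b*hfwf*a
  have hVGtp : (1 - b*a + G)*(G*tp) = G := by
    linear_combination (norm := noncomm_ring) hαG*tp + hGG*tp - hGt*tp + G*htp1
  have hVZR : (1 - b*a + G)*((1 + b*(Y - f*w)*a) + G*tp)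
      = 1 - b*(((1 - f*w)*((a*b)*Y - (a*c)*Y))*a) := by
    linear_combination (norm := noncomm_ring) hαx0 + hGx0 + hVGtp
  have hdYq : ((a*b)*Y - (a*c)*Y)*(a*c) = 0 := by
    linear_combination (norm := noncomm_ring) (a*b)*hYq' - (a*c)*hYq' + hq*Y
  have hkap : (((1 - f*w)*((a*b)*Y - (a*c)*Y))*a)*b
      = (1 - f*w)*(((a*b)*Y - (a*c)*Y)*(a*b - a*c)) := by
    linear_combination (norm := noncomm_ring) (1 - f*w)*hdYq
  have hE2sq : ((1 - f*w)*(((a*b)*Y - (a*c)*Y)*(a*b - a*c)))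
      * ((1 - f*w)*(((a*b)*Y - (a*c)*Y)*(a*b - a*c))) = 0 := by
    linear_combination (norm := noncomm_ring) ((1-f*w)*((a*b-a*c)*Y))*hdd*(Y*(a*b-a*c)) - ((1-f*w)*((a*b-a*c)*Y))*hdfw*((a*b-a*c)*(Y*(a*b-a*c)))
  have hunitR : IsUnit (1 - b*(((1 - f*w)*((a*b)*Y - (a*c)*Y))*a)) := by
    apply isUnit_one_sub_swap
    rw [hkap]
    refine isUnit_of_mul_eq_one_of_mul_eq_one
      (y := 1 + (1 - f*w)*(((a*b)*Y - (a*c)*Y)*(a*b - a*c))) ?_ ?_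
    · linear_combination (norm := noncomm_ring) -hE2sq
    · linear_combination (norm := noncomm_ring) -hE2sq
  have hx0α : (1 + b*(Y - f*w)*a)*(1 - b*a) = 1 - G - b*(((Y - f*w)*(a*b - a*c))*a) := by
    linear_combination (norm := noncomm_ring) hGdef + b*hfdef*a - b*hYq'*a + b*k2'*a
  have hx0G : (1 + b*(Y - f*w)*a)*G = 0 := by
    linear_combination (norm := noncomm_ring) hGdef + (b*(Y - f*w))*haG + b*hYf*a - b*hfwf*a
  have hGVtp : (tp*G)*(1 - b*a + G) = G := by
    linear_combination (norm := noncomm_ring) tp*hGα + tp*hGG - tp*htG + htp2*G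
  have hZLV : ((1 + b*(Y - f*w)*a) + tp*G)*(1 - b*a + G)
      = 1 - b*(((Y - f*w)*(a*b - a*c))*a) := by
    linear_combination (norm := noncomm_ring) hx0α + hx0G + hGVtp
  have hdab0 : (a*b - a*c)*(a*b) = 0 := by
    linear_combination (norm := noncomm_ring) hp
  have hunitL : IsUnit (1 - b*(((Y - f*w)*(a*b - a*c))*a)) := by
    apply isUnit_one_sub_swap
    have hz0 : (((Y - f*w)*(a*b - a*c))*a)*b = 0 := by
      linear_combination (norm := noncomm_ring) (Y - f*w)*hdab0
    rw [hz0, sub_zero]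
    exact isUnit_one
  obtain ⟨UR, hUR⟩ := hunitR
  obtain ⟨uR, huR1, huR2⟩ : ∃ u : R,
      (1 - b*(((1 - f*w)*((a*b)*Y - (a*c)*Y))*a)) * u = 1 ∧
      u * (1 - b*(((1 - f*w)*((a*b)*Y - (a*c)*Y))*a)) = 1 :=
    ⟨↑UR⁻¹, by rw [← hUR]; exact UR.mul_inv, by rw [← hUR]; exact UR.inv_mul⟩
  obtain ⟨UL, hUL⟩ := hunitL
  obtain ⟨uL, huL1, huL2⟩ : ∃ u : R,
      (1 - b*(((Y - f*w)*(a*b - a*c))*a)) * u = 1 ∧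
      u * (1 - b*(((Y - f*w)*(a*b - a*c))*a)) = 1 :=
    ⟨↑UL⁻¹, by rw [← hUL]; exact UL.mul_inv, by rw [← hUL]; exact UL.inv_mul⟩
  have hVright : (1 - b*a + G)*((((1 + b*(Y - f*w)*a) + G*tp))*uR) = 1 := by
    rw [← mul_assoc, hVZR]; exact huR1
  have hVleft : (uL*((1 + b*(Y - f*w)*a) + tp*G))*(1 - b*a + G) = 1 := by
    rw [mul_assoc, hZLV]; exact huL2
  have hsr : uL*((1 + b*(Y - f*w)*a) + tp*G) = (((1 + b*(Y - f*w)*a) + G*tp))*uR := by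
    calc uL*((1 + b*(Y - f*w)*a) + tp*G)
        = (uL*((1 + b*(Y - f*w)*a) + tp*G)) *
            ((1 - b*a + G)*((((1 + b*(Y - f*w)*a) + G*tp))*uR)) := by rw [hVright, mul_one]
      _ = ((uL*((1 + b*(Y - f*w)*a) + tp*G))*(1 - b*a + G)) *
            ((((1 + b*(Y - f*w)*a) + G*tp))*uR) := by noncomm_ring
      _ = (((1 + b*(Y - f*w)*a) + G*tp))*uR := by rw [hVleft, one_mul]
  obtain ⟨Vi, hVi1, hVi2⟩ : ∃ Vi : R, (1 - b*a + G)*Vi = 1 ∧ Vi*(1 - b*a + G) = 1 :=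
    ⟨(((1 + b*(Y - f*w)*a) + G*tp))*uR, hVright, by rw [← hsr]; exact hVleft⟩
  -- assembly
  have hGV : G*(1 - b*a + G) = (1 - b*a + G)*G := by
    linear_combination (norm := noncomm_ring) hGα - hαG
  have hViG : G*Vi = Vi*G := commute_isUnit_inv hGV hVi1 hVi2
  have hαV : (1-b*a)*(1 - b*a + G) = (1 - b*a + G)*(1-b*a) := by
    linear_combination (norm := noncomm_ring) hαG - hGα
  have hViα : (1-b*a)*Vi = Vi*(1-b*a) := commute_isUnit_inv hαV hVi1 hVi2
  have hαx : (1-b*a)*(Vi*(1-G)) = 1 - G := by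
    calc (1-b*a)*(Vi*(1-G)) = (Vi*(1 - b*a + G))*(1-G) := by
          linear_combination (norm := noncomm_ring) hViα*(1-G) + Vi*hGG
      _ = 1 - G := by rw [hVi2, one_mul]
  have hxα : (Vi*(1-G))*(1-b*a) = 1 - G := by
    calc (Vi*(1-G))*(1-b*a) = (Vi*(1 - b*a + G))*(1-G) := by
          linear_combination (norm := noncomm_ring) Vi*hGba + Vi*hGG
      _ = 1 - G := by rw [hVi2, one_mul]
  refine ⟨Vi*(1-G), ?_, ?_, ?_⟩
  · -- x = x α x
    calc Vi*(1-G) = Vi*((1-G)*(1-G)) := by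
          linear_combination (norm := noncomm_ring) -(Vi*hGG)
      _ = ((Vi*(1-G))*(1-b*a))*(Vi*(1-G)) := by
          rw [hxα]; linear_combination (norm := noncomm_ring) hViG*(1-G)
      _ = Vi*(1-G)*(1-b*a)*(Vi*(1-G)) := by noncomm_ring
  · -- double commutant
    intro zz hzz
    have hzβ : zz*(b*a) = (b*a)*zz := by
      linear_combination (norm := noncomm_ring) -hzz
    have hGzz := hGzcomm zz hzβ
    have hVzz : zz*(1 - b*a + G) = (1 - b*a + G)*zz := by
      linear_combination (norm := noncomm_ring) hzz - hGzz
    have hVizz : zz*Vi = Vi*zz := commute_isUnit_inv hVzz hVi1 hVi2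
    linear_combination (norm := noncomm_ring) -(Vi*hGzz) - hVizz*(1-G)
  · -- quasinilpotent part
    have hfin : (1-b*a) - (1-b*a)^2*(Vi*(1-G)) = t := by
      linear_combination (norm := noncomm_ring) hαG - (1-b*a)*hαx
    rw [hfin]; exact hqnilt



section OpTransfer
open MulOpposite
variable {R : Type*} [Ring R]

theorem qnil_op {m : R} (hm : Quasinilpotent m) : Quasinilpotent (op m) := by
  intro ξ hξ
  have hcomm : (unop ξ) * m = m * (unop ξ) := by
    have := congrArg unop hξ
    simpa using this.symm
  have h1 := hm (unop ξ) hcomm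
  have h2 : (1 : Rᵐᵒᵖ) + op m * ξ = op (1 + (unop ξ) * m) := by
    rw [op_add, op_mul, op_unop, op_one]
  rw [h2, isUnit_op]
  rwa [← hcomm] at h1

theorem qnil_unop {m : Rᵐᵒᵖ} (hm : Quasinilpotent m) : Quasinilpotent (unop m) := by
  intro ξ hξ
  have hcomm : (op ξ) * m = m * (op ξ) := by
    have := congrArg op hξ
    simpa using this.symm
  have h1 := hm (op ξ) hcomm
  have h2 : (1 : R) + unop m * ξ = unop (1 + (op ξ) * m) := by
    rw [unop_add, unop_mul, unop_op, unop_one]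
  rw [h2, isUnit_unop]
  rwa [← hcomm] at h1

theorem gd_op {e x : R} (h : IsGDrazin e x) : IsGDrazin (op e) (op x) := by
  obtain ⟨h1, h2, h3⟩ := h
  have hex : x * e = e * x := h2 e rfl
  refine ⟨?_, ?_, ?_⟩
  · rw [← op_mul, ← op_mul]
    exact congrArg op (by linear_combination (norm := noncomm_ring) h1)
  · intro y' hy'
    have hη : (unop y') * e = e * (unop y') := by
      have := congrArg unop hy'
      simpa using this.symm
    have hxy := h2 _ hη
    apply unop_injective
    simp only [unop_mul, unop_op]
    linear_combination (norm := noncomm_ring) -hxy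
  · have hswap : x * e^2 = e^2 * x := by
      linear_combination (norm := noncomm_ring) hex*e + e*hex
    have heq : op e - (op e)^2 * (op x) = op (e - e^2*x) := by
      rw [op_sub, ← op_pow, ← op_mul, hswap]
    rw [heq]
    exact qnil_op h3

theorem gd_unop {e x : Rᵐᵒᵖ} (h : IsGDrazin e x) : IsGDrazin (unop e) (unop x) := by
  obtain ⟨h1, h2, h3⟩ := h
  have hex : x * e = e * x := h2 e rfl
  refine ⟨?_, ?_, ?_⟩
  · rw [← unop_mul, ← unop_mul]
    exact congrArg unop (by linear_combination (norm := noncomm_ring) h1)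
  · intro y' hy'
    have hη : (op y') * e = e * (op y') := by
      have := congrArg op hy'
      simpa using this.symm
    have hxy := h2 _ hη
    apply op_injective
    simp only [op_mul, op_unop]
    linear_combination (norm := noncomm_ring) -hxy
  · have hswap : x * e^2 = e^2 * x := by
      linear_combination (norm := noncomm_ring) hex*e + e*hex
    have heq : unop e - (unop e)^2 * (unop x) = unop (e - e^2*x) := by
      rw [unop_sub, ← unop_pow, ← unop_mul, hswap]
    rw [heq]
    exact qnil_unop h3

end OpTransfer

/-- The auxiliary sequence with `(1-b*a)^n = 1 - b * Mseq a c n`, `(1-a*c)^n = 1 - Mseq a c n * c`. -/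
def Mseq {R : Type*} [Ring R] (a c : R) : ℕ → R
  | 0 => 0
  | k+1 => a + Mseq a c k * (1 - c*a)

section MseqFacts
variable {R : Type*} [Ring R]

theorem Mseq_J2 (a c : R) : ∀ k : ℕ, (1 - a*c)^k = 1 - (Mseq a c k)*c := by
  intro k
  induction k with
  | zero => simp [Mseq]
  | succ k IH =>
    rw [pow_succ, IH]
    simp only [Mseq]
    noncomm_ring

theorem Mseq_J3b (a b c : R) (hβ : b*a*(b*a) = b*a*(c*a)) (hγ : c*a*(b*a) = c*a*(c*a)) :
    ∀ k : ℕ, b*(Mseq a c k)*(b*a) = b*(Mseq a c k)*(c*a) := by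
  intro k
  induction k with
  | zero => simp [Mseq]
  | succ k IH =>
    simp only [Mseq]
    linear_combination (norm := noncomm_ring) hβ + IH - (b*(Mseq a c k))*hγ

theorem Mseq_J3c (a b c : R) (hγ : c*a*(b*a) = c*a*(c*a)) :
    ∀ k : ℕ, c*(Mseq a c k)*(b*a) = c*(Mseq a c k)*(c*a) := by
  intro k
  induction k with
  | zero => simp [Mseq]
  | succ k IH =>
    simp only [Mseq]
    linear_combination (norm := noncomm_ring) hγ + IH - (c*(Mseq a c k))*hγ

theorem Mseq_J1 (a b c : R) (hβ : b*a*(b*a) = b*a*(c*a)) (hγ : c*a*(b*a) = c*a*(c*a)) :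
    ∀ k : ℕ, (1 - b*a)^k = 1 - b*(Mseq a c k) := by
  intro k
  induction k with
  | zero => simp [Mseq]
  | succ k IH =>
    rw [pow_succ, IH]
    have J3 := Mseq_J3b a b c hβ hγ k
    simp only [Mseq]
    linear_combination (norm := noncomm_ring) J3

theorem Mseq_TK1 (a b c : R) (hp : a*b*(a*b) = a*c*(a*b)) (hγ : c*a*(b*a) = c*a*(c*a)) :
    ∀ k : ℕ, ((Mseq a c k)*(b*a) - (Mseq a c k)*(c*a))*b = 0 := by
  intro k
  induction k with
  | zero => simp [Mseq]
  | succ k IH =>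
    simp only [Mseq]
    linear_combination (norm := noncomm_ring) hp + IH - (Mseq a c k)*hγ*b

theorem Mseq_TK2 (a b c : R) (hq : a*b*(a*c) = a*c*(a*c)) (hγ : c*a*(b*a) = c*a*(c*a)) :
    ∀ k : ℕ, ((Mseq a c k)*(b*a) - (Mseq a c k)*(c*a))*c = 0 := by
  intro k
  induction k with
  | zero => simp [Mseq]
  | succ k IH =>
    simp only [Mseq]
    linear_combination (norm := noncomm_ring) hq + IH - (Mseq a c k)*hγ*c

theorem Mseq_KB (a b c : R) (hp : a*b*(a*b) = a*c*(a*b)) (hq : a*b*(a*c) = a*c*(a*c))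
    (hγ : c*a*(b*a) = c*a*(c*a)) (n : ℕ) :
    ∀ j : ℕ, ((Mseq a c n)*b*(Mseq a c j) - (Mseq a c n)*c*(Mseq a c j))*b = 0 ∧
             ((Mseq a c n)*b*(Mseq a c j) - (Mseq a c n)*c*(Mseq a c j))*c = 0 := by
  intro j
  induction j with
  | zero => simp [Mseq]
  | succ j IH =>
    obtain ⟨IH1, IH2⟩ := IH
    have T1 := Mseq_TK1 a b c hp hγ n
    have T2 := Mseq_TK2 a b c hq hγ n
    constructor
    · simp only [Mseq]
      linear_combination (norm := noncomm_ring) T1 + IH1 - IH2*(a*b)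
    · simp only [Mseq]
      linear_combination (norm := noncomm_ring) T2 + IH2 - IH2*(a*c)

theorem Mseq_LB (a b c : R) (hβ : b*a*(b*a) = b*a*(c*a)) (hγ : c*a*(b*a) = c*a*(c*a)) (n : ℕ) :
    ∀ j : ℕ, b*((Mseq a c n)*b*(Mseq a c j) - (Mseq a c n)*c*(Mseq a c j)) = 0 ∧
             c*((Mseq a c n)*b*(Mseq a c j) - (Mseq a c n)*c*(Mseq a c j)) = 0 := by
  intro j
  induction j with
  | zero => simp [Mseq]
  | succ j IH =>
    obtain ⟨IH1, IH2⟩ := IH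
    have T1 := Mseq_J3b a b c hβ hγ n
    have T2 := Mseq_J3c a b c hγ n
    constructor
    · simp only [Mseq]
      linear_combination (norm := noncomm_ring) T1 + IH1 - IH1*(c*a)
    · simp only [Mseq]
      linear_combination (norm := noncomm_ring) T2 + IH2 - IH2*(c*a)

end MseqFacts

open MulOpposite

theorem gdrazin_pow_three_elements {R : Type*} [Ring R] (n : ℕ) (hn : 1 ≤ n) (a b c : R)
    (h1 : (a * b * a) * b = (a * c * a) * b) (h2 : b * (a * b * a) = b * (a * c * a))
    (h3 : (a * b * a) * c = (a * c * a) * c) (h4 : c * (a * b * a) = c * (a * c * a)) :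
    (∃ x : R, IsGDrazin ((1 - b * a) ^ n) x) ↔ (∃ y : R, IsGDrazin ((1 - a * c) ^ n) y) := by
  have hp : a*b*(a*b) = a*c*(a*b) := by linear_combination (norm := noncomm_ring) h1
  have hq : a*b*(a*c) = a*c*(a*c) := by linear_combination (norm := noncomm_ring) h3
  have hβ : b*a*(b*a) = b*a*(c*a) := by linear_combination (norm := noncomm_ring) h2
  have hγ : c*a*(b*a) = c*a*(c*a) := by linear_combination (norm := noncomm_ring) h4
  have hKB := Mseq_KB a b c hp hq hγ n n
  have hLB := Mseq_LB a b c hβ hγ n n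
  have hIp : (Mseq a c n)*b*((Mseq a c n)*b) = (Mseq a c n)*c*((Mseq a c n)*b) := by
    linear_combination (norm := noncomm_ring) hKB.1
  have hIq : (Mseq a c n)*b*((Mseq a c n)*c) = (Mseq a c n)*c*((Mseq a c n)*c) := by
    linear_combination (norm := noncomm_ring) hKB.2
  have hIβ : b*(Mseq a c n)*(b*(Mseq a c n)) = b*(Mseq a c n)*(c*(Mseq a c n)) := by
    linear_combination (norm := noncomm_ring) hLB.1
  have hIγ : c*(Mseq a c n)*(b*(Mseq a c n)) = c*(Mseq a c n)*(c*(Mseq a c n)) := by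
    linear_combination (norm := noncomm_ring) hLB.2
  constructor
  · rintro ⟨x, hx⟩
    rw [Mseq_J1 a b c hβ hγ n] at hx
    have hx' := gd_op hx
    have heq : op (1 - b*(Mseq a c n)) = 1 - (op (Mseq a c n))*(op b) := by simp
    rw [heq] at hx'
    obtain ⟨y', hy'⟩ := cross (op (Mseq a c n)) (op c) (op b)
      (by simp only [← op_mul]; exact congrArg op (by linear_combination (norm := noncomm_ring) -hIγ))
      (by simp only [← op_mul]; exact congrArg op (by linear_combination (norm := noncomm_ring) -hIβ))
      (by simp only [← op_mul]; exact congrArg op (by linear_combination (norm := noncomm_ring) -hIq))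
      (by simp only [← op_mul]; exact congrArg op (by linear_combination (norm := noncomm_ring) -hIp))
      _ hx'
    have heq2 : (1 : Rᵐᵒᵖ) - (op c)*(op (Mseq a c n)) = op (1 - (Mseq a c n)*c) := by simp
    rw [heq2] at hy'
    have hfin := gd_unop hy'
    simp only [unop_op] at hfin
    rw [Mseq_J2 a c n]
    exact ⟨unop y', hfin⟩
  · rintro ⟨y, hy⟩
    rw [Mseq_J2 a c n] at hy
    obtain ⟨x, hx⟩ := cross (Mseq a c n) b c hIp hIq hIβ hIγ y hy
    refine ⟨x, ?_⟩
    rw [Mseq_J1 a b c hβ hγ n]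
    exact hx
end

section
/- Let R be a ring and a,b,c,d ∈ R satisfy (ac)² = (db)(ac), (db)² = (ac)(db), b(ac)a = b(db)a, and c(ac)d = c(db)d. Then 1 - bd is Drazin invertible if and only if 1 - ac is Drazin invertible, and in that case the Drazin index satisfies i(1-ac) ≤ i(1-bd) + 1. -/
/-- `x` is a Drazin inverse of `a` with (an) index `k`. -/
def IsDrazinWithIndex {R : Type*} [Ring R] (a x : R) (k : ℕ) : Prop :=
  x = x * a * x ∧ x * a = a * x ∧ a ^ k = a ^ (k + 1) * x

/-- The Drazin index: the least `k` admitting a Drazin inverse with index `k`. -/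
noncomputable def drazinIndex {R : Type*} [Ring R] (a : R) : ℕ :=
  sInf {k : ℕ | ∃ x : R, IsDrazinWithIndex a x k}

private theorem drazin_onesided {R : Type*} [Ring R] (a u v : R) (m : ℕ)
    (hu : a ^ m = a ^ (m + 1) * u) (hv : a ^ m = v * a ^ (m + 1)) :
    ∃ z : R, IsDrazinWithIndex a z m := by
  have G1 : ∀ j : ℕ, a ^ (m + j) * u ^ j = a ^ m := by
    intro j
    induction j with
    | zero => simp
    | succ n ih =>
      calc a ^ (m + (n + 1)) * u ^ (n + 1)
          = (a ^ n * a ^ (m + 1)) * (u * u ^ n) := by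
            rw [show m + (n + 1) = n + (m + 1) by omega, pow_add, pow_succ' u n]
        _ = a ^ n * ((a ^ (m + 1) * u) * u ^ n) := by noncomm_ring
        _ = a ^ n * (a ^ m * u ^ n) := by rw [← hu]
        _ = a ^ (m + n) * u ^ n := by
            rw [← mul_assoc, ← pow_add, show n + m = m + n by omega]
        _ = a ^ m := ih
  have G2 : a ^ m * u = v * a ^ m := by
    calc a ^ m * u = v * (a ^ (m + 1) * u) := by rw [hv, mul_assoc]
      _ = v * a ^ m := by rw [← hu]
  have G3 : ∀ j : ℕ, a ^ m * u ^ j = v ^ j * a ^ m := by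
    intro j
    induction j with
    | zero => simp
    | succ n ih =>
      calc a ^ m * u ^ (n + 1) = (a ^ m * u ^ n) * u := by rw [pow_succ, mul_assoc]
        _ = v ^ n * (a ^ m * u) := by rw [ih, mul_assoc]
        _ = v ^ n * (v * a ^ m) := by rw [G2]
        _ = v ^ (n + 1) * a ^ m := by rw [pow_succ, mul_assoc]
  refine ⟨a ^ m * u ^ (m + 1), ?_, ?_, ?_⟩
  · -- z = z * a * z
    have haz : a * (a ^ m * u ^ (m + 1)) = a ^ m * u ^ m := by
      calc a * (a ^ m * u ^ (m + 1)) = a ^ (m + 1) * u ^ (m + 1) := by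
            rw [← mul_assoc, ← pow_succ']
        _ = (a ^ (m + 1) * u) * u ^ m := by rw [pow_succ' u m, mul_assoc]
        _ = a ^ m * u ^ m := by rw [← hu]
    calc a ^ m * u ^ (m + 1)
        = v ^ (m + 1) * a ^ m := G3 (m + 1)
      _ = v ^ (m + 1) * (a ^ (m + m) * u ^ m) := by rw [G1 m]
      _ = v ^ (m + 1) * ((a ^ m * a ^ m) * u ^ m) := by rw [← pow_add]
      _ = (v ^ (m + 1) * a ^ m) * (a ^ m * u ^ m) := by noncomm_ring
      _ = (a ^ m * u ^ (m + 1)) * (a ^ m * u ^ m) := by rw [← G3 (m + 1)]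
      _ = (a ^ m * u ^ (m + 1)) * (a * (a ^ m * u ^ (m + 1))) := by rw [haz]
      _ = a ^ m * u ^ (m + 1) * a * (a ^ m * u ^ (m + 1)) := by noncomm_ring
  · -- z * a = a * z
    have haz : a * (a ^ m * u ^ (m + 1)) = a ^ m * u ^ m := by
      calc a * (a ^ m * u ^ (m + 1)) = a ^ (m + 1) * u ^ (m + 1) := by
            rw [← mul_assoc, ← pow_succ']
        _ = (a ^ (m + 1) * u) * u ^ m := by rw [pow_succ' u m, mul_assoc]
        _ = a ^ m * u ^ m := by rw [← hu]
    have hza : (a ^ m * u ^ (m + 1)) * a = a ^ m * u ^ m := by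
      calc (a ^ m * u ^ (m + 1)) * a = (v ^ (m + 1) * a ^ m) * a := by rw [G3 (m + 1)]
        _ = v ^ (m + 1) * a ^ (m + 1) := by rw [mul_assoc, ← pow_succ]
        _ = v ^ m * (v * a ^ (m + 1)) := by rw [pow_succ, mul_assoc]
        _ = v ^ m * a ^ m := by rw [← hv]
        _ = a ^ m * u ^ m := (G3 m).symm
    rw [hza, haz]
  · -- a ^ m = a ^ (m + 1) * z
    calc a ^ m = a ^ (m + (m + 1)) * u ^ (m + 1) := (G1 (m + 1)).symm
      _ = (a ^ (m + 1) * a ^ m) * u ^ (m + 1) := by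
          rw [← pow_add, show m + 1 + m = m + (m + 1) by omega]
      _ = a ^ (m + 1) * (a ^ m * u ^ (m + 1)) := by rw [mul_assoc]

private lemma step8 {R : Type*} [Ring R] (r d b A : R) (hq : r * (d * b) = 0)
    (hA : A * (b * d) = (b * d) * A) :
    r * (d * ((A * (1 - b * d)) * b)) = r * (d * (A * b)) := by
  have key : r * (d * ((A * (1 - b * d)) * b)) - r * (d * (A * b))
      = -(r * (d * ((A * (b * d) - (b * d) * A) * b))) + (-((r * (d * b)) * (d * (A * b)))) := by
    noncomm_ring
  rw [hA, hq] at key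
  simp only [sub_self, mul_zero, zero_mul, neg_zero, add_zero, zero_add] at key
  exact sub_eq_zero.mp key

private theorem drazin_transfer {R : Type*} [Ring R] (b d p x : R) (k : ℕ)
    (h1 : p ^ 2 = (d * b) * p) (h2 : (d * b) ^ 2 = p * (d * b))
    (hx : IsDrazinWithIndex (1 - b * d) x k) :
    ∃ z : R, IsDrazinWithIndex (1 - p) z (k + 1) := by
  obtain ⟨-, hxa, hak⟩ := hx
  set α : R := 1 - b * d with hα
  set β : R := 1 - p with hβ
  set γ : R := 1 - d * b with hγ
  set r : R := p - d * b with hr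
  set f : ℕ → R := fun n => ∑ i ∈ Finset.range n, γ ^ i with hf
  -- commutation facts
  have hxbd : x * (b * d) = (b * d) * x := by
    have cert : x * (b * d) - (b * d) * x = α * x - x * α := by rw [hα]; noncomm_ring
    rw [hxa, sub_self] at cert
    exact sub_eq_zero.mp cert
  have hαbd : ∀ j : ℕ, α ^ j * (b * d) = (b * d) * α ^ j := by
    intro j
    have h0 : Commute α (b * d) := by
      show α * (b * d) = (b * d) * α
      rw [hα]; noncomm_ring
    exact (h0.pow_left j).eq
  have hγd : γ * d = d * α := by rw [hγ, hα]; noncomm_ring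
  have hbγ : b * γ = α * b := by rw [hγ, hα]; noncomm_ring
  have hγnd : ∀ n : ℕ, γ ^ n * d = d * α ^ n := by
    intro n
    induction n with
    | zero => simp
    | succ n ih =>
      calc γ ^ (n + 1) * d = γ ^ n * (γ * d) := by rw [pow_succ, mul_assoc]
        _ = (γ ^ n * d) * α := by rw [hγd, mul_assoc]
        _ = d * α ^ (n + 1) := by rw [ih, pow_succ, mul_assoc]
  have hbγn : ∀ n : ℕ, b * γ ^ n = α ^ n * b := by
    intro n
    induction n with
    | zero => simp
    | succ n ih =>
      calc b * γ ^ (n + 1) = (b * γ) * γ ^ n := by rw [pow_succ' γ n, mul_assoc]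
        _ = α * (b * γ ^ n) := by rw [hbγ, mul_assoc]
        _ = α ^ (n + 1) * b := by rw [ih, pow_succ' α n, mul_assoc]
  have hrp : r * p = 0 := by
    have cert : r * p = p ^ 2 - (d * b) * p := by rw [hr]; noncomm_ring
    rw [h1, sub_self] at cert
    exact cert
  have hrq : r * (d * b) = 0 := by
    have cert : r * (d * b) = p * (d * b) - (d * b) ^ 2 := by rw [hr]; noncomm_ring
    rw [h2, sub_self] at cert
    exact cert
  have hpr : p * r = (d * b) * r := by
    have cert : p * r - (d * b) * r = (p ^ 2 - (d * b) * p) + ((d * b) ^ 2 - p * (d * b)) := by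
      rw [hr]; noncomm_ring
    rw [h1, h2, sub_self, sub_self, add_zero] at cert
    exact sub_eq_zero.mp cert
  have hrr : r * r = 0 := by
    have cert : r * r = r * p - r * (d * b) := by rw [hr]; noncomm_ring
    rw [hrp, hrq, sub_zero] at cert
    exact cert
  have hrβ : r * β = r := by
    have cert : r * β = r - r * p := by rw [hβ]; noncomm_ring
    rw [hrp, sub_zero] at cert
    exact cert
  have hrγ : r * γ = r := by
    have cert : r * γ = r - r * (d * b) := by rw [hγ]; noncomm_ring
    rw [hrq, sub_zero] at cert
    exact cert
  have hrβn : ∀ n : ℕ, r * β ^ n = r := by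
    intro n
    induction n with
    | zero => simp
    | succ n ih => rw [pow_succ, ← mul_assoc, ih, hrβ]
  have hrγn : ∀ n : ℕ, r * γ ^ n = r := by
    intro n
    induction n with
    | zero => simp
    | succ n ih => rw [pow_succ, ← mul_assoc, ih, hrγ]
  have hT11 : ∀ n : ℕ, γ ^ n = β ^ n + (f n) * r := by
    intro n
    induction n with
    | zero => simp [hf]
    | succ n ih =>
      have hfn : f (n + 1) = f n + γ ^ n := by
        simp only [hf]
        exact Finset.sum_range_succ _ n
      have hγβr : γ = β + r := by rw [hγ, hβ, hr]; noncomm_ring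
      have hγnr : γ ^ n * r = β ^ n * r := by
        rw [ih, add_mul, mul_assoc, hrr, mul_zero, add_zero]
      calc γ ^ (n + 1) = γ ^ n * γ := pow_succ γ n
        _ = γ ^ n * β + γ ^ n * r := by rw [hγβr, mul_add]
        _ = (β ^ n + f n * r) * β + β ^ n * r := by rw [hγnr, ih]
        _ = β ^ n * β + (f n) * (r * β) + β ^ n * r := by noncomm_ring
        _ = β ^ (n + 1) + ((f n) * r + γ ^ n * r) := by
            rw [hrβ, ← pow_succ, hγnr]; noncomm_ring
        _ = β ^ (n + 1) + f (n + 1) * r := by rw [hfn, add_mul]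
  have hβnp : ∀ n : ℕ, β ^ n * p = γ ^ n * p := by
    intro n
    induction n with
    | zero => simp
    | succ n ih =>
      have hβγr : β = γ - r := by rw [hγ, hβ, hr]; noncomm_ring
      calc β ^ (n + 1) * p = β * (β ^ n * p) := by rw [pow_succ' β n, mul_assoc]
        _ = γ * (γ ^ n * p) - r * (γ ^ n * p) := by rw [ih, hβγr, sub_mul]
        _ = γ ^ (n + 1) * p - (r * γ ^ n) * p := by
            rw [← mul_assoc, ← pow_succ' γ n, mul_assoc]
        _ = γ ^ (n + 1) * p := by rw [hrγn, hrp, sub_zero]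
  have hrd0 : ∀ j : ℕ, r * (d * (α ^ j * b)) = 0 := by
    intro j
    induction j with
    | zero => simpa using hrq
    | succ j ih =>
      have e : α ^ (j + 1) = α ^ j * (1 - b * d) := by rw [← hα]; exact pow_succ α j
      rw [e, step8 r d b (α ^ j) hrq (hαbd j)]
      exact ih
  have hcomxj : ∀ j : ℕ, (x * α ^ j) * (b * d) = (b * d) * (x * α ^ j) := by
    intro j
    calc (x * α ^ j) * (b * d) = x * (α ^ j * (b * d)) := mul_assoc _ _ _
      _ = (x * (b * d)) * α ^ j := by rw [hαbd j, ← mul_assoc]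
      _ = (b * d) * (x * α ^ j) := by rw [hxbd, mul_assoc]
  have hrdx : ∀ j : ℕ, r * (d * (x * b)) = r * (d * ((x * α ^ j) * b)) := by
    intro j
    induction j with
    | zero => simp
    | succ j ih =>
      have e : x * α ^ (j + 1) = (x * α ^ j) * (1 - b * d) := by
        rw [← hα, pow_succ, ← mul_assoc]
      rw [ih, e, step8 r d b (x * α ^ j) hrq (hcomxj j)]
  have hc : Commute x α := hxa
  have hxak : x * α ^ (k + 1) = α ^ k := by
    calc x * α ^ (k + 1) = α ^ (k + 1) * x := (hc.pow_right (k + 1)).eq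
      _ = α ^ k := hak.symm
  have hrdxb : r * (d * (x * b)) = 0 := by
    rw [hrdx (k + 1), hxak]
    exact hrd0 k
  have hak2 : α ^ (k + 2) * x = α ^ (k + 1) := by
    calc α ^ (k + 2) * x = (α * α ^ (k + 1)) * x := by rw [← pow_succ' α (k + 1)]
      _ = α * (α ^ (k + 1) * x) := mul_assoc _ _ _
      _ = α * α ^ k := by rw [← hak]
      _ = α ^ (k + 1) := (pow_succ' α k).symm
  have hxak2 : x * α ^ (k + 2) = α ^ (k + 1) := by
    calc x * α ^ (k + 2) = α ^ (k + 2) * x := (hc.pow_right (k + 2)).eq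
      _ = α ^ (k + 1) := hak2
  -- RIGHT-side divisibility
  have e1a : γ ^ (k + 1) * (d * b) = γ ^ (k + 2) * (d * (x * b)) := by
    calc γ ^ (k + 1) * (d * b) = (γ ^ (k + 1) * d) * b := (mul_assoc _ _ _).symm
      _ = (d * α ^ (k + 1)) * b := by rw [hγnd]
      _ = d * ((α ^ (k + 2) * x) * b) := by rw [mul_assoc, hak2]
      _ = (d * α ^ (k + 2)) * (x * b) := by noncomm_ring
      _ = (γ ^ (k + 2) * d) * (x * b) := by rw [hγnd]
      _ = γ ^ (k + 2) * (d * (x * b)) := mul_assoc _ _ _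
  have e1b : γ ^ (k + 2) * (d * (x * b)) = β ^ (k + 2) * (d * (x * b)) := by
    rw [hT11 (k + 2), add_mul, mul_assoc, hrdxb, mul_zero, add_zero]
  have e1d : γ ^ (k + 1) * r = β ^ (k + 1) * r := by
    rw [hT11 (k + 1), add_mul, mul_assoc, hrr, mul_zero, add_zero]
  have e1 : γ ^ (k + 1) * p = β ^ (k + 1) * r + β ^ (k + 2) * (d * (x * b)) := by
    have c : γ ^ (k + 1) * p = γ ^ (k + 1) * r + γ ^ (k + 1) * (d * b) := by
      rw [hr]; noncomm_ring
    rw [c, e1d, e1a, e1b]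
  have e19 : β ^ (k + 1) * p = β ^ (k + 1) * r + β ^ (k + 2) * (d * (x * b)) := by
    rw [hβnp (k + 1), e1]
  have e2 : β ^ (k + 1) * r = β ^ (k + 2) * r + β ^ (k + 2) * ((d * (x * b)) * r) := by
    have s2 : (β ^ (k + 1) * p) * r = β ^ (k + 2) * ((d * (x * b)) * r) := by
      calc (β ^ (k + 1) * p) * r = (γ ^ (k + 1) * p) * r := by rw [hβnp (k + 1)]
        _ = γ ^ (k + 1) * ((d * b) * r) := by rw [mul_assoc, hpr]
        _ = (γ ^ (k + 1) * (d * b)) * r := (mul_assoc _ _ _).symm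
        _ = (β ^ (k + 2) * (d * (x * b))) * r := by rw [e1a, e1b]
        _ = β ^ (k + 2) * ((d * (x * b)) * r) := mul_assoc _ _ _
    have s1 : β ^ (k + 2) * r = β ^ (k + 1) * r - β ^ (k + 2) * ((d * (x * b)) * r) := by
      calc β ^ (k + 2) * r = β ^ (k + 1) * (β * r) := by rw [pow_succ, mul_assoc]
        _ = β ^ (k + 1) * (r - p * r) := by
            rw [show β * r = r - p * r by rw [hβ]; noncomm_ring]
        _ = β ^ (k + 1) * r - (β ^ (k + 1) * p) * r := by noncomm_ring
        _ = β ^ (k + 1) * r - β ^ (k + 2) * ((d * (x * b)) * r) := by rw [s2]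
    have : β ^ (k + 2) * r + β ^ (k + 2) * ((d * (x * b)) * r) = β ^ (k + 1) * r := by
      rw [s1]; abel
    exact this.symm
  have hsplitR : β ^ (k + 1) = β ^ (k + 2) + β ^ (k + 1) * p := by
    have c : β ^ (k + 2) = β ^ (k + 1) - β ^ (k + 1) * p := by
      rw [pow_succ, hβ]; noncomm_ring
    rw [c]; abel
  have hu : β ^ (k + 1) = β ^ (k + 2) * (1 + d * (x * b) + r + (d * (x * b)) * r) := by
    rw [hsplitR, e19, e2]
    noncomm_ring
  -- LEFT-side divisibility
  have f1a : (d * b) * γ ^ (k + 1) = (d * (x * b)) * γ ^ (k + 2) := by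
    calc (d * b) * γ ^ (k + 1) = d * (b * γ ^ (k + 1)) := mul_assoc _ _ _
      _ = d * (α ^ (k + 1) * b) := by rw [hbγn]
      _ = d * ((x * α ^ (k + 2)) * b) := by rw [hxak2]
      _ = (d * x) * (α ^ (k + 2) * b) := by noncomm_ring
      _ = (d * x) * (b * γ ^ (k + 2)) := by rw [← hbγn]
      _ = (d * (x * b)) * γ ^ (k + 2) := by noncomm_ring
  have hsplitL : β ^ (k + 1) = β ^ (k + 2) + p * β ^ (k + 1) := by
    have c : β ^ (k + 2) = β ^ (k + 1) - p * β ^ (k + 1) := by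
      rw [pow_succ' β (k + 1), hβ]; noncomm_ring
    rw [c]; abel
  have f3 : p * β ^ (k + 1) = (d * b) * β ^ (k + 1) + r := by
    have c : p * β ^ (k + 1) = (d * b) * β ^ (k + 1) + r * β ^ (k + 1) := by
      rw [hr]; noncomm_ring
    rw [c, hrβn]
  have f4 : (d * b) * β ^ (k + 1)
      = (d * (x * b)) * β ^ (k + 2) + (d * (x * b)) * ((f (k + 2)) * r)
        - (d * b) * ((f (k + 1)) * r) := by
    have c1 : β ^ (k + 1) = γ ^ (k + 1) - (f (k + 1)) * r := by
      rw [hT11 (k + 1)]; abel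
    calc (d * b) * β ^ (k + 1)
        = (d * b) * γ ^ (k + 1) - (d * b) * ((f (k + 1)) * r) := by rw [c1, mul_sub]
      _ = (d * (x * b)) * γ ^ (k + 2) - (d * b) * ((f (k + 1)) * r) := by rw [f1a]
      _ = (d * (x * b)) * (β ^ (k + 2) + f (k + 2) * r) - (d * b) * ((f (k + 1)) * r) := by
          rw [hT11 (k + 2)]
      _ = (d * (x * b)) * β ^ (k + 2) + (d * (x * b)) * ((f (k + 2)) * r)
          - (d * b) * ((f (k + 1)) * r) := by noncomm_ring
  have hv : β ^ (k + 1)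
      = (1 + d * (x * b) + (1 + (d * (x * b)) * (f (k + 2)) - (d * b) * (f (k + 1))) * r)
        * β ^ (k + 2) := by
    have collect : β ^ (k + 1)
        = (1 + d * (x * b)) * β ^ (k + 2)
          + (1 + (d * (x * b)) * (f (k + 2)) - (d * b) * (f (k + 1))) * r := by
      rw [hsplitL, f3, f4]; noncomm_ring
    have hrB : r = r * β ^ (k + 2) := (hrβn (k + 2)).symm
    calc β ^ (k + 1)
        = (1 + d * (x * b)) * β ^ (k + 2)
          + (1 + (d * (x * b)) * (f (k + 2)) - (d * b) * (f (k + 1))) * r := collect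
      _ = (1 + d * (x * b)) * β ^ (k + 2)
          + (1 + (d * (x * b)) * (f (k + 2)) - (d * b) * (f (k + 1))) * (r * β ^ (k + 2)) := by
          rw [← hrB]
      _ = (1 + d * (x * b) + (1 + (d * (x * b)) * (f (k + 2)) - (d * b) * (f (k + 1))) * r)
          * β ^ (k + 2) := by noncomm_ring
  obtain ⟨z, hz⟩ := drazin_onesided β
    (1 + d * (x * b) + r + (d * (x * b)) * r)
    (1 + d * (x * b) + (1 + (d * (x * b)) * (f (k + 2)) - (d * b) * (f (k + 1))) * r)
    (k + 1) hu hv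
  exact ⟨z, hz⟩

theorem drazin_iff_index {R : Type*} [Ring R] (a b c d : R)
    (h1 : (a * c) ^ 2 = (d * b) * (a * c)) (h2 : (d * b) ^ 2 = (a * c) * (d * b))
    (h3 : b * (a * c) * a = b * (d * b) * a) (h4 : c * (a * c) * d = c * (d * b) * d) :
    ((∃ x : R, ∃ k : ℕ, IsDrazinWithIndex (1 - b * d) x k) ↔
      (∃ y : R, ∃ k : ℕ, IsDrazinWithIndex (1 - a * c) y k)) ∧
    ((∃ x : R, ∃ k : ℕ, IsDrazinWithIndex (1 - b * d) x k) →
      drazinIndex (1 - a * c) ≤ drazinIndex (1 - b * d) + 1) := by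
  constructor
  · constructor
    · rintro ⟨x, k, hx⟩
      obtain ⟨z, hz⟩ := drazin_transfer b d (a * c) x k h1 h2 hx
      exact ⟨z, k + 1, hz⟩
    · rintro ⟨y, k, hy⟩
      obtain ⟨z1, hz1⟩ := drazin_transfer a c (c * a) y k (sq (c * a)) (sq (c * a)) hy
      obtain ⟨z2, hz2⟩ := drazin_transfer c a (d * b) z1 (k + 1) h2 h1 hz1
      obtain ⟨z3, hz3⟩ := drazin_transfer d b (b * d) z2 (k + 2) (sq (b * d)) (sq (b * d)) hz2
      exact ⟨z3, k + 3, hz3⟩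
  · rintro ⟨x, k, hx⟩
    have hne : {m : ℕ | ∃ x : R, IsDrazinWithIndex (1 - b * d) x m}.Nonempty := ⟨k, x, hx⟩
    obtain ⟨x0, hx0⟩ := Nat.sInf_mem hne
    obtain ⟨z, hz⟩ := drazin_transfer b d (a * c) x0 _ h1 h2 hx0
    exact Nat.sInf_le ⟨z, hz⟩
end
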